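/- arXiv:2406.00147 — 4 statements merged into one kernel-verified Lean document; each statement's English description precedes it below -/
import Mathlib

section
/- Consider the group-level static fair allocation problem. Let μ₁ and μ₂ be Borel probability measures on compact intervals [a₁,b₁] and [a₂,b₂] respectively, each with a continuous strictly positive density, let μ = μ₁ ⊗ μ₂ be their product measure on ℝ², let φ₁ and φ₂ be continuous strictly increasing real functions on [a₁,b₁] and [a₂,b₂] respectively, and let α₁, α₂ ≥ 0 with α₁ + α₂ ≤ 1. Suppose (G₁, G₂) is a pair of disjoint Borel subsets of ℝ² with μ(Gᵢ) ≥ αᵢ for i = 1,2 that maximizes the objective W(G₁,G₂) = ∫_{G₁} φ₁(v₁) dμ(v₁,v₂) + ∫_{G₂} φ₂(v₂) dμ(v₁,v₂) over all pairs of disjoint Borel sets satisfying these measure constraints. Then there exist η₁, η₂ ≥ 0 and γ ∈ ℝ with η₂ = η₁ + γ such that, up to μ-null sets, G₁ = {(v₁,v₂) : φ₁(v₁) ≥ φ₂(v₂) + γ and φ₁(v₁) ≥ −η₁} and G₂ = {(v₁,v₂) : φ₂(v₂) ≥ φ₁(v₁) − γ and φ₂(v₂) ≥ −η₂}. -/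
open MeasureTheory Set

/-- bounded measurable functions on finite measure spaces are integrable -/
lemma sfa_integrable_of_bdd {μ : Measure (ℝ×ℝ)} [IsFiniteMeasure μ] {f : ℝ×ℝ → ℝ}
    (hm : AEStronglyMeasurable f μ) {C : ℝ} (h : ∀ v, |f v| ≤ C) : Integrable f μ :=
  (integrable_const C).mono' hm (Filter.Eventually.of_forall (fun v => by simpa using h v))

/-- the threshold set -/
def Tset (g h : ℝ×ℝ → ℝ) (l m : ℝ) : Set (ℝ×ℝ) := {v | h v + m ≤ g v + l ∧ 0 ≤ g v + l}

lemma Tset_measurable {g h : ℝ×ℝ → ℝ} (hg : Continuous g) (hh : Continuous h) (l m : ℝ) :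
    MeasurableSet (Tset g h l m) := by
  have : Tset g h l m = {v | h v + m ≤ g v + l} ∩ {v | 0 ≤ g v + l} := rfl
  rw [this]
  exact ((isClosed_le (by fun_prop) (by fun_prop)).measurableSet).inter
    ((isClosed_le continuous_const (by fun_prop)).measurableSet)

lemma Tset_mono {g h : ℝ×ℝ → ℝ} {m : ℝ} : Monotone (fun l => Tset g h l m) := by
  intro a b hab v hv
  exact ⟨hv.1.trans (by linarith), hv.2.trans (by linarith)⟩

/-- objective integrand -/
def Jfun (g h : ℝ×ℝ → ℝ) (l m : ℝ) (v : ℝ×ℝ) : ℝ := max 0 (max (g v + l) (h v + m))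

lemma Jfun_integrable {μ : Measure (ℝ×ℝ)} [IsFiniteMeasure μ] {g h : ℝ×ℝ → ℝ}
    (hg : Continuous g) (hh : Continuous h) {Cg Ch : ℝ}
    (hbg : ∀ v, |g v| ≤ Cg) (hbh : ∀ v, |h v| ≤ Ch) (l m : ℝ) :
    Integrable (Jfun g h l m) μ := by
  apply sfa_integrable_of_bdd (C := max 0 (max (Cg + |l|) (Ch + |m|)))
  · exact (Continuous.aestronglyMeasurable (by unfold Jfun; fun_prop))
  · intro v
    have h1 := abs_le.1 (hbg v); have h2 := abs_le.1 (hbh v)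
    have hl := abs_le.1 (le_refl |l|); have hm := abs_le.1 (le_refl |m|)
    have : |Jfun g h l m v| = Jfun g h l m v := abs_of_nonneg (le_max_left _ _)
    rw [this]
    apply max_le (le_max_left _ _)
    apply max_le
    · exact le_trans (by linarith [neg_abs_le l, le_abs_self l]) (le_max_of_le_right (le_max_left _ _))
    · exact le_trans (by linarith [neg_abs_le m, le_abs_self m]) (le_max_of_le_right (le_max_right _ _))

lemma kkt_coord (μ : Measure (ℝ×ℝ)) [IsProbabilityMeasure μ]
    (g h : ℝ×ℝ → ℝ) (hg : Continuous g) (hh : Continuous h)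
    (Cg Ch : ℝ) (hbg : ∀ v, |g v| ≤ Cg) (hbh : ∀ v, |h v| ≤ Ch)
    (α l m : ℝ) (hα : 0 ≤ α) (hl : 0 ≤ l)
    (hnD : μ {v | g v - h v = m - l} = 0)
    (hn1 : μ {v | g v = -l} = 0)
    (hvar : ∀ t : ℝ, 0 ≤ l + t →
      α * t ≤ (∫ v, Jfun g h (l+t) m v ∂μ) - (∫ v, Jfun g h l m v ∂μ)) :
    ENNReal.ofReal α ≤ μ (Tset g h l m) ∧ (l = 0 ∨ (μ (Tset g h l m)).toReal = α) := by
  have hJint : ∀ l', Integrable (Jfun g h l' m) μ :=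
    fun l' => Jfun_integrable hg hh hbg hbh l' m
  -- step (a)
  have key : ∀ t : ℝ, 0 < t → α ≤ (μ (Tset g h (l+t) m)).toReal := by
    intro t ht
    have hpt : ∀ v, Jfun g h (l+t) m v - Jfun g h l m v
        ≤ (Tset g h (l+t) m).indicator (fun _ => t) v := by
      intro v
      by_cases hv : v ∈ Tset g h (l+t) m
      · rw [Set.indicator_of_mem hv]
        have h0 : (0:ℝ) ≤ max 0 (max (g v + l) (h v + m)) := le_max_left _ _
        have hx : g v + l ≤ max 0 (max (g v + l) (h v + m)) :=
          le_max_of_le_right (le_max_left _ _)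
        have h1 : g v + (l+t) ≤ max 0 (max (g v + l) (h v + m)) + t := by linarith
        have h2 : h v + m ≤ max 0 (max (g v + l) (h v + m)) + t := by
          have : h v + m ≤ max 0 (max (g v + l) (h v + m)) :=
            le_max_of_le_right (le_max_right _ _)
          linarith
        have : Jfun g h (l+t) m v ≤ max 0 (max (g v + l) (h v + m)) + t := by
          unfold Jfun
          exact max_le (by linarith) (max_le h1 h2)
        unfold Jfun at this ⊢
        linarith
      · rw [Set.indicator_of_notMem hv]
        simp only [Tset, Set.mem_setOf_eq, not_and_or, not_le] at hv
        have h2 : Jfun g h (l+t) m v ≤ Jfun g h l m v := by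
          unfold Jfun
          rcases hv with hv | hv
          · exact max_le (le_max_left _ _) (max_le
              (le_trans hv.le (le_max_of_le_right (le_max_right _ _)))
              (le_max_of_le_right (le_max_right _ _)))
          · exact max_le (le_max_left _ _) (max_le
              (le_trans hv.le (le_max_left _ _))
              (le_max_of_le_right (le_max_right _ _)))
        linarith
    have hmeas : MeasurableSet (Tset g h (l+t) m) := Tset_measurable hg hh _ _
    have hintind : Integrable ((Tset g h (l+t) m).indicator (fun _ => t)) μ :=
      (integrable_const t).indicator hmeas
    have hle : (∫ v, Jfun g h (l+t) m v ∂μ) - (∫ v, Jfun g h l m v ∂μ)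
        ≤ t * (μ (Tset g h (l+t) m)).toReal := by
      rw [← integral_sub (hJint _) (hJint _)]
      calc ∫ v, (Jfun g h (l+t) m v - Jfun g h l m v) ∂μ
          ≤ ∫ v, (Tset g h (l+t) m).indicator (fun _ => t) v ∂μ :=
            integral_mono ((hJint _).sub (hJint _)) hintind hpt
        _ = (μ (Tset g h (l+t) m)).toReal * t := by
            rw [integral_indicator hmeas, setIntegral_const]; simp [smul_eq_mul, measureReal_def]
        _ = t * (μ (Tset g h (l+t) m)).toReal := mul_comm _ _
    have := le_trans (hvar t (by linarith)) hle
    nlinarith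
  -- step (b): feasibility
  have hfeas : ENNReal.ofReal α ≤ μ (Tset g h l m) := by
    set s : ℕ → Set (ℝ×ℝ) := fun n => Tset g h (l + 1/(n+1)) m with hs
    have hanti : Antitone s := by
      intro n n' hnn
      apply Tset_mono
      have hcast : (n:ℝ) ≤ n' := Nat.cast_le.2 hnn
      have : (1:ℝ)/(n'+1) ≤ 1/(n+1) := by
        apply one_div_le_one_div_of_le (by positivity)
        linarith
      linarith
    have hiInter : ⋂ n, s n = Tset g h l m := by
      ext v
      simp only [Set.mem_iInter, hs, Tset, Set.mem_setOf_eq]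
      constructor
      · intro hv
        constructor
        · by_contra hc
          push_neg at hc
          obtain ⟨n, hn⟩ := exists_nat_one_div_lt (show (0:ℝ) < h v + m - (g v + l) by linarith)
          have := (hv n).1
          linarith
        · by_contra hc
          push_neg at hc
          obtain ⟨n, hn⟩ := exists_nat_one_div_lt (show (0:ℝ) < -(g v + l) by linarith)
          have := (hv n).2
          linarith
      · intro hv n
        have hp : (0:ℝ) < 1/(n+1) := by positivity
        exact ⟨hv.1.trans (by linarith), hv.2.trans (by linarith)⟩
    have htend := MeasureTheory.tendsto_measure_iInter_atTop
      (s := s) (fun n => (Tset_measurable hg hh _ _).nullMeasurableSet)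
      hanti ⟨0, measure_ne_top μ _⟩
    rw [hiInter] at htend
    apply ge_of_tendsto htend
    apply Filter.Eventually.of_forall
    intro n
    exact ENNReal.ofReal_le_of_le_toReal (key (1/(n+1)) (by positivity))
  refine ⟨hfeas, ?_⟩
  -- step (c): complementary slackness
  rcases hl.eq_or_lt with heq | hlt
  · exact Or.inl heq.symm
  right
  have key2 : ∀ t : ℝ, 0 < t → t ≤ l → (μ (Tset g h (l-t) m)).toReal ≤ α := by
    intro t ht htl
    have hpt : ∀ v, (Tset g h (l-t) m).indicator (fun _ => t) v
        ≤ Jfun g h l m v - Jfun g h (l-t) m v := by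
      intro v
      by_cases hv : v ∈ Tset g h (l-t) m
      · rw [Set.indicator_of_mem hv]
        obtain ⟨hv1, hv2⟩ := hv
        have hJeq : Jfun g h (l-t) m v = g v + (l-t) := by
          unfold Jfun
          rw [max_eq_left hv1, max_eq_right hv2]
        have hJge : g v + l ≤ Jfun g h l m v :=
          le_max_of_le_right (le_max_left _ _)
        linarith
      · rw [Set.indicator_of_notMem hv]
        have : Jfun g h (l-t) m v ≤ Jfun g h l m v := by
          unfold Jfun
          exact max_le (le_max_left _ _) (max_le
            (le_max_of_le_right ((by linarith : g v + (l-t) ≤ g v + l).trans (le_max_left _ _)))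
            (le_max_of_le_right (le_max_right _ _)))
        linarith
    have hmeas : MeasurableSet (Tset g h (l-t) m) := Tset_measurable hg hh _ _
    have hle : t * (μ (Tset g h (l-t) m)).toReal
        ≤ (∫ v, Jfun g h l m v ∂μ) - (∫ v, Jfun g h (l-t) m v ∂μ) := by
      rw [← integral_sub (hJint _) (hJint _)]
      calc t * (μ (Tset g h (l-t) m)).toReal
          = ∫ v, (Tset g h (l-t) m).indicator (fun _ => t) v ∂μ := by
            rw [integral_indicator hmeas, setIntegral_const]; simp [smul_eq_mul, mul_comm, measureReal_def]
        _ ≤ ∫ v, (Jfun g h l m v - Jfun g h (l-t) m v) ∂μ :=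
            integral_mono ((integrable_const t).indicator hmeas)
              ((hJint _).sub (hJint _)) hpt
    have hv := hvar (-t) (by linarith)
    have : (∫ v, Jfun g h l m v ∂μ) - (∫ v, Jfun g h (l-t) m v ∂μ) ≤ α * t := by
      have hrw : l + -t = l - t := by ring
      rw [hrw] at hv
      linarith
    nlinarith
  set s' : ℕ → Set (ℝ×ℝ) := fun n => Tset g h (l - l/(n+2)) m with hs'
  have hmono : Monotone s' := by
    intro n n' hnn
    apply Tset_mono
    have h1 : (0:ℝ) < n + 2 := by positivity
    have h2 : (n:ℝ) + 2 ≤ (n':ℝ) + 2 := by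
      have : (n:ℝ) ≤ n' := by exact_mod_cast hnn
      linarith
    have : l/((n':ℝ)+2) ≤ l/((n:ℝ)+2) := by
      apply div_le_div_of_nonneg_left hlt.le h1 h2
    linarith
  have hunion : ⋃ n, s' n = {v | h v + m < g v + l ∧ 0 < g v + l} := by
    ext v
    simp only [Set.mem_iUnion, hs', Tset, Set.mem_setOf_eq]
    constructor
    · rintro ⟨n, hn1, hn2⟩
      have : (0:ℝ) < l/(n+2) := by positivity
      exact ⟨by linarith, by linarith⟩
    · rintro ⟨hv1, hv2⟩
      have hε : (0:ℝ) < min (g v + l - (h v + m)) (g v + l) := lt_min (by linarith) hv2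
      obtain ⟨n, hn⟩ := exists_nat_one_div_lt (div_pos hε hlt)
      refine ⟨n, ?_, ?_⟩
      · have h1 : l/((n:ℝ)+2) ≤ l * (1/((n:ℝ)+1)) := by
          rw [mul_one_div]
          apply div_le_div_of_nonneg_left hlt.le (by positivity) (by linarith)
        have h2 : l * (1/((n:ℝ)+1)) < l * (min (g v + l - (h v + m)) (g v + l) / l) :=
          mul_lt_mul_of_pos_left hn hlt
        rw [mul_div_cancel₀ _ (ne_of_gt hlt)] at h2
        have := min_le_left (g v + l - (h v + m)) (g v + l)
        linarith
      · have h1 : l/((n:ℝ)+2) ≤ l * (1/((n:ℝ)+1)) := by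
          rw [mul_one_div]
          apply div_le_div_of_nonneg_left hlt.le (by positivity) (by linarith)
        have h2 : l * (1/((n:ℝ)+1)) < l * (min (g v + l - (h v + m)) (g v + l) / l) :=
          mul_lt_mul_of_pos_left hn hlt
        rw [mul_div_cancel₀ _ (ne_of_gt hlt)] at h2
        have := min_le_right (g v + l - (h v + m)) (g v + l)
        linarith
  have htend := MeasureTheory.tendsto_measure_iUnion_atTop (s := s') (μ := μ) hmono
  have hstrict : μ {v | h v + m < g v + l ∧ 0 < g v + l} ≤ ENNReal.ofReal α := by
    rw [← hunion]
    apply le_of_tendsto htend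
    apply Filter.Eventually.of_forall
    intro n
    have ht : (0:ℝ) < l/(n+2) := by positivity
    have htl : l/((n:ℝ)+2) ≤ l := div_le_self hlt.le (by linarith [Nat.cast_nonneg (α := ℝ) n])
    exact (ENNReal.le_ofReal_iff_toReal_le (measure_ne_top μ _) hα).2 (key2 _ ht htl)
  have hsub : Tset g h l m ⊆ {v | h v + m < g v + l ∧ 0 < g v + l}
      ∪ ({v | g v - h v = m - l} ∪ {v | g v = -l}) := by
    intro v ⟨hv1, hv2⟩
    rcases eq_or_lt_of_le hv1 with he | hlt1
    · exact Or.inr (Or.inl (by simp only [Set.mem_setOf_eq]; linarith))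
    rcases eq_or_lt_of_le hv2 with he | hlt2
    · exact Or.inr (Or.inr (by simp only [Set.mem_setOf_eq]; linarith))
    · exact Or.inl ⟨hlt1, hlt2⟩
  have hub : μ (Tset g h l m) ≤ ENNReal.ofReal α := by
    calc μ (Tset g h l m) ≤ μ ({v | h v + m < g v + l ∧ 0 < g v + l}
        ∪ ({v | g v - h v = m - l} ∪ {v | g v = -l})) := measure_mono hsub
      _ ≤ μ {v | h v + m < g v + l ∧ 0 < g v + l}
          + μ ({v | g v - h v = m - l} ∪ {v | g v = -l}) := measure_union_le _ _
      _ ≤ ENNReal.ofReal α + (μ {v | g v - h v = m - l} + μ {v | g v = -l}) := by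
          exact add_le_add hstrict (measure_union_le _ _)
      _ = ENNReal.ofReal α := by rw [hnD, hn1]; simp
  have : μ (Tset g h l m) = ENNReal.ofReal α := le_antisymm hub hfeas
  rw [this, ENNReal.toReal_ofReal hα]

lemma kkt_exists_lt (μ : Measure (ℝ×ℝ)) [IsProbabilityMeasure μ]
    (g₁ g₂ : ℝ×ℝ → ℝ) (hg₁ : Continuous g₁) (hg₂ : Continuous g₂)
    (C₁ C₂ : ℝ) (hb₁ : ∀ v, |g₁ v| ≤ C₁) (hb₂ : ∀ v, |g₂ v| ≤ C₂)
    (hD : ∀ c, μ {v | g₁ v - g₂ v = c} = 0)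
    (h1 : ∀ c, μ {v | g₁ v = c} = 0) (h2 : ∀ c, μ {v | g₂ v = c} = 0)
    (α₁ α₂ : ℝ) (hα₁ : 0 ≤ α₁) (hα₂ : 0 ≤ α₂) (hlt : α₁ + α₂ < 1) :
    ∃ l₁ l₂ : ℝ, 0 ≤ l₁ ∧ 0 ≤ l₂ ∧
      ENNReal.ofReal α₁ ≤ μ (Tset g₁ g₂ l₁ l₂) ∧
      ENNReal.ofReal α₂ ≤ μ (Tset g₂ g₁ l₂ l₁) ∧
      (l₁ = 0 ∨ (μ (Tset g₁ g₂ l₁ l₂)).toReal = α₁) ∧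
      (l₂ = 0 ∨ (μ (Tset g₂ g₁ l₂ l₁)).toReal = α₂) := by
  have hJint : ∀ a b : ℝ, Integrable (Jfun g₁ g₂ a b) μ :=
    fun a b => Jfun_integrable hg₁ hg₂ hb₁ hb₂ a b
  set Φ : ℝ×ℝ → ℝ := fun l => ∫ v, Jfun g₁ g₂ l.1 l.2 v ∂μ with hΦ
  set D : ℝ×ℝ → ℝ := fun l => Φ l - (α₁ * l.1 + α₂ * l.2) with hDdef
  -- Lipschitz continuity of Φ
  have hptlip : ∀ (l l' : ℝ×ℝ) v, |Jfun g₁ g₂ l.1 l.2 v - Jfun g₁ g₂ l'.1 l'.2 v| ≤ dist l l' := by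
    intro l l' v
    unfold Jfun
    have h1' := abs_max_sub_max_le_max (g₁ v + l.1) (g₂ v + l.2) (g₁ v + l'.1) (g₂ v + l'.2)
    have h2' := abs_max_sub_max_le_max (0:ℝ) (max (g₁ v + l.1) (g₂ v + l.2)) 0
      (max (g₁ v + l'.1) (g₂ v + l'.2))
    have e1 : |g₁ v + l.1 - (g₁ v + l'.1)| = |l.1 - l'.1| := by ring_nf
    have e2 : |g₂ v + l.2 - (g₂ v + l'.2)| = |l.2 - l'.2| := by ring_nf
    rw [e1, e2] at h1'
    have hd : dist l l' = max (dist l.1 l'.1) (dist l.2 l'.2) := Prod.dist_eq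
    rw [hd, Real.dist_eq, Real.dist_eq]
    simp only [sub_self, abs_zero] at h2'
    calc |max 0 (max (g₁ v + l.1) (g₂ v + l.2)) - max 0 (max (g₁ v + l'.1) (g₂ v + l'.2))|
        ≤ max 0 |max (g₁ v + l.1) (g₂ v + l.2) - max (g₁ v + l'.1) (g₂ v + l'.2)| := h2'
      _ = |max (g₁ v + l.1) (g₂ v + l.2) - max (g₁ v + l'.1) (g₂ v + l'.2)| :=
          max_eq_right (abs_nonneg _)
      _ ≤ max |l.1 - l'.1| |l.2 - l'.2| := h1'
  have hΦlip : LipschitzWith 1 Φ := by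
    apply LipschitzWith.of_dist_le_mul
    intro l l'
    rw [Real.dist_eq, NNReal.coe_one, one_mul]
    have : Φ l - Φ l' = ∫ v, (Jfun g₁ g₂ l.1 l.2 v - Jfun g₁ g₂ l'.1 l'.2 v) ∂μ := by
      rw [integral_sub (hJint _ _) (hJint _ _)]
    rw [this]
    calc |∫ v, (Jfun g₁ g₂ l.1 l.2 v - Jfun g₁ g₂ l'.1 l'.2 v) ∂μ|
        ≤ ∫ v, |Jfun g₁ g₂ l.1 l.2 v - Jfun g₁ g₂ l'.1 l'.2 v| ∂μ := by
          simpa using norm_integral_le_integral_norm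
            (fun v => Jfun g₁ g₂ l.1 l.2 v - Jfun g₁ g₂ l'.1 l'.2 v) (μ := μ)
      _ ≤ ∫ _ , dist l l' ∂μ := integral_mono (((hJint _ _).sub (hJint _ _)).abs)
          (integrable_const _) (fun v => hptlip l l' v)
      _ = dist l l' := by simp
  have hDcont : Continuous D := by
    apply Continuous.sub hΦlip.continuous
    fun_prop
  -- bounds on ∫ g
  have hintg₁ : |∫ v, g₁ v ∂μ| ≤ C₁ := by
    have ha : |∫ v, g₁ v ∂μ| ≤ ∫ v, |g₁ v| ∂μ := by
      simpa using norm_integral_le_integral_norm g₁ (μ := μ)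
    have hbb : (∫ v, |g₁ v| ∂μ) ≤ ∫ _, C₁ ∂μ :=
      integral_mono (sfa_integrable_of_bdd hg₁.aestronglyMeasurable (fun v => hb₁ v)).abs
        (integrable_const _) (fun v => by simpa using hb₁ v)
    have hc : (∫ _, C₁ ∂μ : ℝ) = C₁ := by simp
    linarith
  have hintg₂ : |∫ v, g₂ v ∂μ| ≤ C₂ := by
    have ha : |∫ v, g₂ v ∂μ| ≤ ∫ v, |g₂ v| ∂μ := by
      simpa using norm_integral_le_integral_norm g₂ (μ := μ)
    have hbb : (∫ v, |g₂ v| ∂μ) ≤ ∫ _, C₂ ∂μ :=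
      integral_mono (sfa_integrable_of_bdd hg₂.aestronglyMeasurable (fun v => hb₂ v)).abs
        (integrable_const _) (fun v => by simpa using hb₂ v)
    have hc : (∫ _, C₂ ∂μ : ℝ) = C₂ := by simp
    linarith
  set ε : ℝ := (1 - α₁ - α₂)/3 with hε
  have hεpos : 0 < ε := by rw [hε]; linarith
  have hcoerce : ∀ l : ℝ×ℝ, 0 ≤ l.1 → 0 ≤ l.2 → ε*(l.1+l.2) - (C₁+C₂) ≤ D l := by
    intro l hl1 hl2
    have hpt : ∀ v, (α₁+ε)*(g₁ v + l.1) + (α₂+ε)*(g₂ v + l.2) ≤ Jfun g₁ g₂ l.1 l.2 v := by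
      intro v
      have hJ0 : (0:ℝ) ≤ Jfun g₁ g₂ l.1 l.2 v := le_max_left _ _
      have hJa : g₁ v + l.1 ≤ Jfun g₁ g₂ l.1 l.2 v := le_max_of_le_right (le_max_left _ _)
      have hJb : g₂ v + l.2 ≤ Jfun g₁ g₂ l.1 l.2 v := le_max_of_le_right (le_max_right _ _)
      have hw1 : (0:ℝ) ≤ α₁ + ε := by linarith
      have hw2 : (0:ℝ) ≤ α₂ + ε := by linarith
      have hwsum : α₁ + ε + (α₂ + ε) ≤ 1 := by rw [hε]; linarith
      nlinarith [mul_le_mul_of_nonneg_left hJa hw1, mul_le_mul_of_nonneg_left hJb hw2]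
    have hint : (α₁+ε)*((∫ v, g₁ v ∂μ) + l.1) + (α₂+ε)*((∫ v, g₂ v ∂μ) + l.2) ≤ Φ l := by
      have := integral_mono (μ := μ)
        (f := fun v => (α₁+ε)*(g₁ v + l.1) + (α₂+ε)*(g₂ v + l.2))
        (g := fun v => Jfun g₁ g₂ l.1 l.2 v)
        (by
          apply Integrable.add
          · exact (((sfa_integrable_of_bdd hg₁.aestronglyMeasurable (fun v => hb₁ v)).add
              (integrable_const l.1)).const_mul _)
          · exact (((sfa_integrable_of_bdd hg₂.aestronglyMeasurable (fun v => hb₂ v)).add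
              (integrable_const l.2)).const_mul _))
        (hJint _ _) hpt
      have e1 : (∫ v, (α₁+ε)*(g₁ v + l.1) ∂μ) = (α₁+ε)*((∫ v, g₁ v ∂μ) + l.1) := by
        rw [integral_const_mul]
        congr 1
        rw [integral_add (sfa_integrable_of_bdd hg₁.aestronglyMeasurable (fun v => hb₁ v))
          (integrable_const _)]
        simp
      have e2 : (∫ v, (α₂+ε)*(g₂ v + l.2) ∂μ) = (α₂+ε)*((∫ v, g₂ v ∂μ) + l.2) := by
        rw [integral_const_mul]
        congr 1
        rw [integral_add (sfa_integrable_of_bdd hg₂.aestronglyMeasurable (fun v => hb₂ v))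
          (integrable_const _)]
        simp
      have esum := integral_add (μ := μ)
        (f := fun v => (α₁+ε)*(g₁ v + l.1)) (g := fun v => (α₂+ε)*(g₂ v + l.2))
        (((sfa_integrable_of_bdd hg₁.aestronglyMeasurable (fun v => hb₁ v)).add
          (integrable_const l.1)).const_mul _)
        (((sfa_integrable_of_bdd hg₂.aestronglyMeasurable (fun v => hb₂ v)).add
          (integrable_const l.2)).const_mul _)
      rw [e1, e2] at esum
      rw [← esum]
      exact this
    have haux1 : (α₁+ε) ≤ 1 := by rw [hε]; linarith
    have haux2 : (α₂+ε) ≤ 1 := by rw [hε]; linarith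
    have hC₁ : 0 ≤ C₁ := le_trans (abs_nonneg _) (hb₁ (0,0))
    have hC₂ : 0 ≤ C₂ := le_trans (abs_nonneg _) (hb₂ (0,0))
    have hi1 := abs_le.1 hintg₁
    have hi2 := abs_le.1 hintg₂
    simp only [hDdef]
    nlinarith [mul_le_mul_of_nonneg_left hi1.1 (le_of_lt (by linarith : (0:ℝ) < α₁+ε)),
      mul_le_mul_of_nonneg_left hi2.1 (le_of_lt (by linarith : (0:ℝ) < α₂+ε))]
  set R : ℝ := (C₁+C₂+|D (0,0)|+1)/ε with hR
  have hC₁ : 0 ≤ C₁ := le_trans (abs_nonneg _) (hb₁ (0,0))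
  have hC₂ : 0 ≤ C₂ := le_trans (abs_nonneg _) (hb₂ (0,0))
  have hRpos : 0 ≤ R := by
    apply div_nonneg _ hεpos.le
    positivity
  have hK : IsCompact (Set.Icc ((0:ℝ),(0:ℝ)) (R,R)) := isCompact_Icc
  obtain ⟨lstar, hlK, hmin⟩ := hK.exists_isMinOn
    ⟨(0,0), Set.mem_Icc.2 ⟨le_refl _, Prod.le_def.2 ⟨hRpos, hRpos⟩⟩⟩ hDcont.continuousOn
  obtain ⟨hl0, hlR⟩ := Set.mem_Icc.1 hlK
  have hl₁ : 0 ≤ lstar.1 := (Prod.le_def.1 hl0).1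
  have hl₂ : 0 ≤ lstar.2 := (Prod.le_def.1 hl0).2
  have hglobal : ∀ m : ℝ×ℝ, 0 ≤ m.1 → 0 ≤ m.2 → D lstar ≤ D m := by
    intro m hm1 hm2
    by_cases hm : m ∈ Set.Icc ((0:ℝ),(0:ℝ)) (R,R)
    · exact hmin hm
    · have hsum : R < m.1 + m.2 := by
        rcases not_and_or.1 (fun hc => hm (Set.mem_Icc.2
          ⟨Prod.le_def.2 ⟨hm1, hm2⟩, Prod.le_def.2 hc⟩)) with hc | hc <;> push_neg at hc <;> linarith
      have h00 : D lstar ≤ D (0,0) :=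
        hmin (Set.mem_Icc.2 ⟨le_refl _, Prod.le_def.2 ⟨hRpos, hRpos⟩⟩)
      have hcm := hcoerce m hm1 hm2
      have hεR : ε * R = C₁+C₂+|D (0,0)|+1 := by
        rw [hR, mul_div_cancel₀ _ (ne_of_gt hεpos)]
      have : D (0,0) ≤ |D (0,0)| := le_abs_self _
      nlinarith [mul_lt_mul_of_pos_left hsum hεpos]
  -- coordinate 1
  have hvar1 : ∀ t : ℝ, 0 ≤ lstar.1 + t →
      α₁ * t ≤ (∫ v, Jfun g₁ g₂ (lstar.1+t) lstar.2 v ∂μ) - (∫ v, Jfun g₁ g₂ lstar.1 lstar.2 v ∂μ) := by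
    intro t ht
    have := hglobal (lstar.1 + t, lstar.2) ht hl₂
    simp only [hDdef, hΦ] at this ⊢
    linarith
  have hres1 := kkt_coord μ g₁ g₂ hg₁ hg₂ C₁ C₂ hb₁ hb₂ α₁ lstar.1 lstar.2 hα₁ hl₁
    (hD _) (h1 _) hvar1
  -- coordinate 2
  have hswap : ∀ a b : ℝ, ∀ v, Jfun g₂ g₁ a b v = Jfun g₁ g₂ b a v := by
    intro a b v; unfold Jfun; rw [max_comm (g₂ v + a) (g₁ v + b)]
  have h2D : ∀ c, μ {v | g₂ v - g₁ v = c} = 0 := by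
    intro c
    have : {v | g₂ v - g₁ v = c} = {v | g₁ v - g₂ v = -c} := by
      ext v; simp only [Set.mem_setOf_eq]; constructor <;> intro <;> linarith
    rw [this]; exact hD (-c)
  have hvar2 : ∀ t : ℝ, 0 ≤ lstar.2 + t →
      α₂ * t ≤ (∫ v, Jfun g₂ g₁ (lstar.2+t) lstar.1 v ∂μ) - (∫ v, Jfun g₂ g₁ lstar.2 lstar.1 v ∂μ) := by
    intro t ht
    have hg := hglobal (lstar.1, lstar.2 + t) hl₁ ht
    simp only [hDdef, hΦ] at hg
    have e1 : (∫ v, Jfun g₂ g₁ (lstar.2+t) lstar.1 v ∂μ) = ∫ v, Jfun g₁ g₂ lstar.1 (lstar.2+t) v ∂μ := by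
      apply integral_congr_ae; exact Filter.Eventually.of_forall (fun v => hswap _ _ v)
    have e2 : (∫ v, Jfun g₂ g₁ lstar.2 lstar.1 v ∂μ) = ∫ v, Jfun g₁ g₂ lstar.1 lstar.2 v ∂μ := by
      apply integral_congr_ae; exact Filter.Eventually.of_forall (fun v => hswap _ _ v)
    rw [e1, e2]
    linarith
  have hres2 := kkt_coord μ g₂ g₁ hg₂ hg₁ C₂ C₁ hb₂ hb₁ α₂ lstar.2 lstar.1 hα₂ hl₂
    (h2D _) (h2 _) hvar2
  exact ⟨lstar.1, lstar.2, hl₁, hl₂, hres1.1, hres2.1, hres1.2, hres2.2⟩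

lemma kkt_exists_eq (μ : Measure (ℝ×ℝ)) [IsProbabilityMeasure μ]
    (g₁ g₂ : ℝ×ℝ → ℝ) (hg₁ : Continuous g₁) (hg₂ : Continuous g₂)
    (C₁ C₂ : ℝ) (hb₁ : ∀ v, |g₁ v| ≤ C₁) (hb₂ : ∀ v, |g₂ v| ≤ C₂)
    (hD : ∀ c, μ {v | g₁ v - g₂ v = c} = 0)
    (α₁ α₂ : ℝ) (hα₁ : 0 ≤ α₁) (hα₂ : 0 ≤ α₂) (heq : α₁ + α₂ = 1) :
    ∃ l₁ l₂ : ℝ, 0 ≤ l₁ ∧ 0 ≤ l₂ ∧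
      ENNReal.ofReal α₁ ≤ μ (Tset g₁ g₂ l₁ l₂) ∧
      ENNReal.ofReal α₂ ≤ μ (Tset g₂ g₁ l₂ l₁) ∧
      (l₁ = 0 ∨ (μ (Tset g₁ g₂ l₁ l₂)).toReal = α₁) ∧
      (l₂ = 0 ∨ (μ (Tset g₂ g₁ l₂ l₁)).toReal = α₂) := by
  have hC₁ : 0 ≤ C₁ := le_trans (abs_nonneg _) (hb₁ (0,0))
  have hC₂ : 0 ≤ C₂ := le_trans (abs_nonneg _) (hb₂ (0,0))
  set B : ℝ := C₁ + C₂ + 1 with hB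
  have hBpos : 0 < B := by rw [hB]; linarith
  set T : ℝ → Set (ℝ×ℝ) := fun γ => {v | g₂ v + γ ≤ g₁ v} with hT
  have hTmeas : ∀ γ, MeasurableSet (T γ) :=
    fun γ => (isClosed_le (by fun_prop) (by fun_prop)).measurableSet
  have hTanti : ∀ ⦃γ γ' : ℝ⦄, γ ≤ γ' → T γ' ⊆ T γ := by
    intro γ γ' hγ v hv; simp only [hT, Set.mem_setOf_eq] at hv ⊢; linarith
  have hTB : T B = ∅ := by
    ext v
    simp only [hT, Set.mem_setOf_eq, Set.mem_empty_iff_false, iff_false, not_le]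
    have := abs_le.1 (hb₁ v); have := abs_le.1 (hb₂ v)
    rw [hB]; linarith [(abs_le.1 (hb₁ v)).2, (abs_le.1 (hb₂ v)).1]
  have hTnB : T (-B) = Set.univ := by
    ext v
    simp only [hT, Set.mem_setOf_eq, Set.mem_univ, iff_true]
    rw [hB]; linarith [(abs_le.1 (hb₁ v)).1, (abs_le.1 (hb₂ v)).2]
  set A : Set ℝ := {γ | γ ∈ Set.Icc (-B) B ∧ (μ (T γ)).toReal ≤ α₁} with hA
  have hBA : B ∈ A := by
    refine ⟨Set.mem_Icc.2 ⟨by linarith, le_refl _⟩, ?_⟩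
    rw [hTB]; simp [hα₁]
  have hbdd : BddBelow A := ⟨-B, fun γ hγ => hγ.1.1⟩
  set γs : ℝ := sInf A with hγs
  have hγlb : -B ≤ γs := le_csInf ⟨B, hBA⟩ (fun γ hγ => hγ.1.1)
  have hγub : γs ≤ B := csInf_le hbdd hBA
  -- upper bound
  have hup : μ (T γs) ≤ ENNReal.ofReal α₁ := by
    have heach : ∀ n : ℕ, μ (T (γs + 1/(n+1))) ≤ ENNReal.ofReal α₁ := by
      intro n
      have hlt' : γs < γs + 1/(n+1) := by
        have : (0:ℝ) < 1/(n+1) := by positivity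
        linarith
      obtain ⟨a, haA, halt⟩ := exists_lt_of_csInf_lt ⟨B, hBA⟩ (hγs ▸ hlt')
      calc μ (T (γs + 1/(n+1))) ≤ μ (T a) := measure_mono (hTanti halt.le)
        _ ≤ ENNReal.ofReal α₁ :=
          (ENNReal.le_ofReal_iff_toReal_le (measure_ne_top μ _) hα₁).2 haA.2
    have hmono : Monotone (fun n : ℕ => T (γs + 1/(n+1))) := by
      intro n n' hnn
      apply hTanti
      have hcast : (n:ℝ) ≤ n' := Nat.cast_le.2 hnn
      have : (1:ℝ)/(n'+1) ≤ 1/(n+1) := by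
        apply one_div_le_one_div_of_le (by positivity); linarith
      linarith
    have hunion : (⋃ n : ℕ, T (γs + 1/(n+1))) = {v | g₂ v + γs < g₁ v} := by
      ext v
      simp only [Set.mem_iUnion, hT, Set.mem_setOf_eq]
      constructor
      · rintro ⟨n, hn⟩
        have : (0:ℝ) < 1/(n+1) := by positivity
        linarith
      · intro hv
        obtain ⟨n, hn⟩ := exists_nat_one_div_lt (show (0:ℝ) < g₁ v - (g₂ v + γs) by linarith)
        exact ⟨n, by linarith⟩
    have htend := MeasureTheory.tendsto_measure_iUnion_atTop (μ := μ) hmono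
    rw [hunion] at htend
    have hstrict : μ {v | g₂ v + γs < g₁ v} ≤ ENNReal.ofReal α₁ :=
      le_of_tendsto htend (Filter.Eventually.of_forall heach)
    have hsub : T γs ⊆ {v | g₂ v + γs < g₁ v} ∪ {v | g₁ v - g₂ v = γs} := by
      intro v hv
      have hv' : g₂ v + γs ≤ g₁ v := hv
      rcases eq_or_lt_of_le hv' with he | hl
      · exact Or.inr (by simp only [Set.mem_setOf_eq]; linarith)
      · exact Or.inl hl
    calc μ (T γs) ≤ μ ({v | g₂ v + γs < g₁ v} ∪ {v | g₁ v - g₂ v = γs}) := measure_mono hsub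
      _ ≤ μ {v | g₂ v + γs < g₁ v} + μ {v | g₁ v - g₂ v = γs} := measure_union_le _ _
      _ = μ {v | g₂ v + γs < g₁ v} := by rw [hD]; simp
      _ ≤ ENNReal.ofReal α₁ := hstrict
  -- lower bound
  have hα₁le : α₁ ≤ 1 := by linarith
  have hlow : ENNReal.ofReal α₁ ≤ μ (T γs) := by
    rcases eq_or_lt_of_le hγlb with he | hlt
    · rw [← he, hTnB]
      simp only [measure_univ]
      exact ENNReal.ofReal_le_one.2 hα₁le
    · set δ : ℝ := γs + B with hδ
      have hδpos : 0 < δ := by rw [hδ]; linarith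
      have heach : ∀ n : ℕ, ENNReal.ofReal α₁ ≤ μ (T (γs - δ/(n+2))) := by
        intro n
        have htn : (0:ℝ) < δ/(n+2) := by positivity
        have htle : δ/((n:ℝ)+2) ≤ δ := div_le_self hδpos.le (by linarith [Nat.cast_nonneg (α := ℝ) n])
        have hmem : γs - δ/(n+2) ∉ A := by
          intro hc
          have := csInf_le hbdd hc
          rw [← hγs] at this
          linarith
        have hicc : γs - δ/(n+2) ∈ Set.Icc (-B) B := by
          constructor
          · rw [hδ] at htle ⊢; linarith
          · linarith
        have : ¬ (μ (T (γs - δ/(n+2)))).toReal ≤ α₁ := fun hc => hmem ⟨hicc, hc⟩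
        push_neg at this
        exact ENNReal.ofReal_le_of_le_toReal this.le
      have hanti : Antitone (fun n : ℕ => T (γs - δ/(n+2))) := by
        intro n n' hnn
        apply hTanti
        have hcast : (n:ℝ) ≤ n' := Nat.cast_le.2 hnn
        have : δ/((n':ℝ)+2) ≤ δ/((n:ℝ)+2) :=
          div_le_div_of_nonneg_left hδpos.le (by positivity) (by linarith)
        linarith
      have hinter : (⋂ n : ℕ, T (γs - δ/(n+2))) = T γs := by
        ext v
        simp only [Set.mem_iInter, hT, Set.mem_setOf_eq]
        constructor
        · intro hv
          by_contra hc
          push_neg at hc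
          obtain ⟨n, hn⟩ := exists_nat_one_div_lt
            (div_pos (show (0:ℝ) < g₂ v + γs - g₁ v by linarith) hδpos)
          have h1' : δ/((n:ℝ)+2) ≤ δ * (1/((n:ℝ)+1)) := by
            rw [mul_one_div]
            apply div_le_div_of_nonneg_left hδpos.le (by positivity) (by linarith)
          have h2' : δ * (1/((n:ℝ)+1)) < δ * ((g₂ v + γs - g₁ v)/δ) :=
            mul_lt_mul_of_pos_left hn hδpos
          rw [mul_div_cancel₀ _ (ne_of_gt hδpos)] at h2'
          have := hv n
          linarith
        · intro hv n
          have : (0:ℝ) < δ/(n+2) := by positivity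
          linarith
      have htend := MeasureTheory.tendsto_measure_iInter_atTop (μ := μ)
        (fun n => (hTmeas _).nullMeasurableSet) hanti ⟨0, measure_ne_top μ _⟩
      rw [hinter] at htend
      exact ge_of_tendsto htend (Filter.Eventually.of_forall heach)
  have hTγs : μ (T γs) = ENNReal.ofReal α₁ := le_antisymm hup hlow
  -- strict version has same measure
  have hstrictsub : T γs ⊆ {v | g₂ v + γs < g₁ v} ∪ {v | g₁ v - g₂ v = γs} := by
    intro v hv
    have hv' : g₂ v + γs ≤ g₁ v := hv
    rcases eq_or_lt_of_le hv' with he | hl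
    · exact Or.inr (by simp only [Set.mem_setOf_eq]; linarith)
    · exact Or.inl hl
  have hstrictmeas : MeasurableSet {v : ℝ×ℝ | g₂ v + γs < g₁ v} :=
    (isOpen_lt (by fun_prop) (by fun_prop)).measurableSet
  have hstricteq : μ {v | g₂ v + γs < g₁ v} = ENNReal.ofReal α₁ := by
    apply le_antisymm
    · rw [← hTγs]
      exact measure_mono (fun v hv => show g₂ v + γs ≤ g₁ v from le_of_lt hv)
    · rw [← hTγs]
      calc μ (T γs) ≤ μ ({v | g₂ v + γs < g₁ v} ∪ {v | g₁ v - g₂ v = γs}) :=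
          measure_mono hstrictsub
        _ ≤ μ {v | g₂ v + γs < g₁ v} + μ {v | g₁ v - g₂ v = γs} := measure_union_le _ _
        _ = μ {v | g₂ v + γs < g₁ v} := by rw [hD]; simp
  -- define multipliers
  refine ⟨B + |γs|, B + |γs| + γs, by positivity, by linarith [neg_abs_le γs], ?_⟩
  have hS1 : Tset g₁ g₂ (B + |γs|) (B + |γs| + γs) = T γs := by
    ext v
    simp only [Tset, hT, Set.mem_setOf_eq]
    constructor
    · rintro ⟨h1', _⟩; linarith
    · intro hv
      refine ⟨by linarith, ?_⟩
      have := (abs_le.1 (hb₁ v)).1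
      have : -C₁ ≤ g₁ v := this
      have habs : (0:ℝ) ≤ |γs| := abs_nonneg _
      rw [hB] at *
      linarith
  have hS2 : Tset g₂ g₁ (B + |γs| + γs) (B + |γs|) = {v | g₂ v + γs < g₁ v}ᶜ := by
    ext v
    simp only [Tset, Set.mem_setOf_eq, Set.mem_compl_iff, not_lt]
    constructor
    · rintro ⟨h1', _⟩; linarith
    · intro hv
      refine ⟨by linarith, ?_⟩
      have := (abs_le.1 (hb₂ v)).1
      have habs : (0:ℝ) ≤ |γs| + γs := by linarith [neg_abs_le γs]
      rw [hB] at *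
      linarith
  have hμS1 : μ (Tset g₁ g₂ (B + |γs|) (B + |γs| + γs)) = ENNReal.ofReal α₁ := by
    rw [hS1, hTγs]
  have hμS2 : μ (Tset g₂ g₁ (B + |γs| + γs) (B + |γs|)) = ENNReal.ofReal α₂ := by
    rw [hS2, measure_compl hstrictmeas (measure_ne_top μ _), hstricteq, measure_univ]
    have : α₂ = 1 - α₁ := by linarith
    rw [this, ENNReal.ofReal_sub _ hα₁, ENNReal.ofReal_one]
  refine ⟨hμS1.ge, hμS2.ge, Or.inr ?_, Or.inr ?_⟩
  · rw [hμS1, ENNReal.toReal_ofReal hα₁]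
  · rw [hμS2, ENNReal.toReal_ofReal hα₂]

lemma sfa_uniqueness (μ : Measure (ℝ×ℝ)) [IsProbabilityMeasure μ]
    (g₁ g₂ : ℝ×ℝ → ℝ) (hg₁ : Continuous g₁) (hg₂ : Continuous g₂)
    (C₁ C₂ : ℝ) (hb₁ : ∀ v, |g₁ v| ≤ C₁) (hb₂ : ∀ v, |g₂ v| ≤ C₂)
    (hD : ∀ c, μ {v | g₁ v - g₂ v = c} = 0)
    (h1 : ∀ c, μ {v | g₁ v = c} = 0) (h2 : ∀ c, μ {v | g₂ v = c} = 0)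
    (α₁ α₂ : ℝ) (hα₁ : 0 ≤ α₁) (hα₂ : 0 ≤ α₂)
    (l₁ l₂ : ℝ) (hl₁ : 0 ≤ l₁) (hl₂ : 0 ≤ l₂)
    (hfS₁ : ENNReal.ofReal α₁ ≤ μ (Tset g₁ g₂ l₁ l₂))
    (hfS₂ : ENNReal.ofReal α₂ ≤ μ (Tset g₂ g₁ l₂ l₁))
    (hsl₁ : l₁ = 0 ∨ (μ (Tset g₁ g₂ l₁ l₂)).toReal = α₁)
    (hsl₂ : l₂ = 0 ∨ (μ (Tset g₂ g₁ l₂ l₁)).toReal = α₂)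
    (G₁ G₂ : Set (ℝ×ℝ)) (mG₁ : MeasurableSet G₁) (mG₂ : MeasurableSet G₂)
    (hdisj : Disjoint G₁ G₂)
    (hfair₁ : ENNReal.ofReal α₁ ≤ μ G₁) (hfair₂ : ENNReal.ofReal α₂ ≤ μ G₂)
    (hopt : ∀ A B : Set (ℝ×ℝ), MeasurableSet A → MeasurableSet B → Disjoint A B →
      ENNReal.ofReal α₁ ≤ μ A → ENNReal.ofReal α₂ ≤ μ B →
      (∫ v in A, g₁ v ∂μ) + (∫ v in B, g₂ v ∂μ)
        ≤ (∫ v in G₁, g₁ v ∂μ) + (∫ v in G₂, g₂ v ∂μ)) :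
    μ (symmDiff G₁ (Tset g₁ g₂ l₁ l₂)) = 0 ∧ μ (symmDiff G₂ (Tset g₂ g₁ l₂ l₁)) = 0 := by
  set S₁ : Set (ℝ×ℝ) := Tset g₁ g₂ l₁ l₂ with hS₁def
  set S₂ : Set (ℝ×ℝ) := Tset g₂ g₁ l₂ l₁ with hS₂def
  set S₂' : Set (ℝ×ℝ) := S₂ \ S₁ with hS₂'def
  have mS₁ : MeasurableSet S₁ := Tset_measurable hg₁ hg₂ _ _
  have mS₂ : MeasurableSet S₂ := Tset_measurable hg₂ hg₁ _ _
  have mS₂' : MeasurableSet S₂' := mS₂.diff mS₁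
  have hcapnull : μ (S₂ ∩ S₁) = 0 := by
    apply measure_mono_null _ (hD (l₂ - l₁))
    rintro v ⟨hv₂, hv₁⟩
    have h₂' : g₁ v + l₁ ≤ g₂ v + l₂ := hv₂.1
    have h₁' : g₂ v + l₂ ≤ g₁ v + l₁ := hv₁.1
    simp only [Set.mem_setOf_eq]; linarith
  have hμS₂' : μ S₂' = μ S₂ := by
    apply le_antisymm (measure_mono Set.diff_subset)
    calc μ S₂ ≤ μ (S₂' ∪ (S₂ ∩ S₁)) := measure_mono (fun v hv => by
          by_cases hv1 : v ∈ S₁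
          · exact Or.inr ⟨hv, hv1⟩
          · exact Or.inl ⟨hv, hv1⟩)
      _ ≤ μ S₂' + μ (S₂ ∩ S₁) := measure_union_le _ _
      _ = μ S₂' := by rw [hcapnull, add_zero]
  have hfS₂' : ENNReal.ofReal α₂ ≤ μ S₂' := hμS₂' ▸ hfS₂
  have hdisjS : Disjoint S₁ S₂' := disjoint_sdiff_self_right
  -- integrability
  set f₁ : ℝ×ℝ → ℝ := fun v => g₁ v + l₁ with hf₁def
  set f₂ : ℝ×ℝ → ℝ := fun v => g₂ v + l₂ with hf₂def
  have hif₁ : Integrable f₁ μ := (sfa_integrable_of_bdd hg₁.aestronglyMeasurable hb₁).add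
    (integrable_const l₁)
  have hif₂ : Integrable f₂ μ := (sfa_integrable_of_bdd hg₂.aestronglyMeasurable hb₂).add
    (integrable_const l₂)
  have hiJ : Integrable (Jfun g₁ g₂ l₁ l₂) μ := Jfun_integrable hg₁ hg₂ hb₁ hb₂ l₁ l₂
  set fG : ℝ×ℝ → ℝ := fun v => G₁.indicator f₁ v + G₂.indicator f₂ v with hfGdef
  set fS : ℝ×ℝ → ℝ := fun v => S₁.indicator f₁ v + S₂'.indicator f₂ v with hfSdef
  have hifG : Integrable fG μ := (hif₁.indicator mG₁).add (hif₂.indicator mG₂)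
  have hifS : Integrable fS μ := (hif₁.indicator mS₁).add (hif₂.indicator mS₂')
  -- pointwise inequalities
  have hJa : ∀ v, g₁ v + l₁ ≤ Jfun g₁ g₂ l₁ l₂ v :=
    fun v => le_max_of_le_right (le_max_left _ _)
  have hJb : ∀ v, g₂ v + l₂ ≤ Jfun g₁ g₂ l₁ l₂ v :=
    fun v => le_max_of_le_right (le_max_right _ _)
  have hJ0 : ∀ v, (0:ℝ) ≤ Jfun g₁ g₂ l₁ l₂ v := fun v => le_max_left _ _
  have hGle : ∀ v, fG v ≤ Jfun g₁ g₂ l₁ l₂ v := by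
    intro v
    simp only [hfGdef]
    by_cases hv1 : v ∈ G₁
    · have hv2 : v ∉ G₂ := fun hc => (Set.disjoint_left.1 hdisj hv1) hc
      rw [Set.indicator_of_mem hv1, Set.indicator_of_notMem hv2, add_zero]
      exact hJa v
    · rw [Set.indicator_of_notMem hv1, zero_add]
      by_cases hv2 : v ∈ G₂
      · rw [Set.indicator_of_mem hv2]; exact hJb v
      · rw [Set.indicator_of_notMem hv2]; exact hJ0 v
  have hJS₁ : ∀ v ∈ S₁, Jfun g₁ g₂ l₁ l₂ v = g₁ v + l₁ := by
    intro v hv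
    unfold Jfun
    rw [max_eq_left hv.1, max_eq_right hv.2]
  have hJS₂ : ∀ v ∈ S₂, Jfun g₁ g₂ l₁ l₂ v = g₂ v + l₂ := by
    intro v hv
    unfold Jfun
    rw [max_eq_right hv.1, max_eq_right hv.2]
  have hSeq : ∀ v, fS v = Jfun g₁ g₂ l₁ l₂ v := by
    intro v
    simp only [hfSdef]
    by_cases hv1 : v ∈ S₁
    · have hv2 : v ∉ S₂' := fun hc => hc.2 hv1
      rw [Set.indicator_of_mem hv1, Set.indicator_of_notMem hv2, add_zero, hJS₁ v hv1]
    · rw [Set.indicator_of_notMem hv1, zero_add]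
      by_cases hv2 : v ∈ S₂
      · have hv2' : v ∈ S₂' := ⟨hv2, hv1⟩
        rw [Set.indicator_of_mem hv2', hJS₂ v hv2]
      · rw [Set.indicator_of_notMem (fun hc => hv2 hc.1)]
        simp only [hS₁def, Tset, Set.mem_setOf_eq, not_and_or, not_le] at hv1
        simp only [hS₂def, Tset, Set.mem_setOf_eq, not_and_or, not_le] at hv2
        unfold Jfun
        symm
        apply max_eq_left
        rcases hv1 with hv1 | hv1 <;> rcases hv2 with hv2 | hv2 <;>
          [linarith; (exact max_le (by linarith) hv2.le);
           (exact max_le hv1.le (by linarith)); (exact max_le hv1.le hv2.le)]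
  -- integral identities
  have hexp : ∀ (A B : Set (ℝ×ℝ)), MeasurableSet A → MeasurableSet B →
      (∫ v, (A.indicator f₁ v + B.indicator f₂ v) ∂μ)
        = ((∫ v in A, g₁ v ∂μ) + (∫ v in B, g₂ v ∂μ))
          + (l₁ * (μ A).toReal + l₂ * (μ B).toReal) := by
    intro A B mA mB
    rw [integral_add (hif₁.indicator mA) (hif₂.indicator mB),
      integral_indicator mA, integral_indicator mB]
    have e1 : (∫ v in A, f₁ v ∂μ) = (∫ v in A, g₁ v ∂μ) + l₁ * (μ A).toReal := by
      simp only [hf₁def]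
      rw [integral_add ((sfa_integrable_of_bdd hg₁.aestronglyMeasurable hb₁).integrableOn)
        (integrableOn_const (measure_ne_top μ A)), setIntegral_const]
      simp [mul_comm, measureReal_def]
    have e2 : (∫ v in B, f₂ v ∂μ) = (∫ v in B, g₂ v ∂μ) + l₂ * (μ B).toReal := by
      simp only [hf₂def]
      rw [integral_add ((sfa_integrable_of_bdd hg₂.aestronglyMeasurable hb₂).integrableOn)
        (integrableOn_const (measure_ne_top μ B)), setIntegral_const]
      simp [mul_comm, measureReal_def]
    rw [e1, e2]; ring
  have hfGint : (∫ v, fG v ∂μ)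
      = ((∫ v in G₁, g₁ v ∂μ) + (∫ v in G₂, g₂ v ∂μ))
        + (l₁ * (μ G₁).toReal + l₂ * (μ G₂).toReal) := hexp G₁ G₂ mG₁ mG₂
  have hfSint : (∫ v, fS v ∂μ)
      = ((∫ v in S₁, g₁ v ∂μ) + (∫ v in S₂', g₂ v ∂μ))
        + (l₁ * (μ S₁).toReal + l₂ * (μ S₂').toReal) := hexp S₁ S₂' mS₁ mS₂'
  -- scalar comparisons
  have hαm₁ : α₁ ≤ (μ G₁).toReal := by
    have := ENNReal.toReal_mono (measure_ne_top μ G₁) hfair₁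
    rwa [ENNReal.toReal_ofReal hα₁] at this
  have hαm₂ : α₂ ≤ (μ G₂).toReal := by
    have := ENNReal.toReal_mono (measure_ne_top μ G₂) hfair₂
    rwa [ENNReal.toReal_ofReal hα₂] at this
  have hls₁ : l₁ * (μ S₁).toReal ≤ l₁ * (μ G₁).toReal := by
    rcases hsl₁ with h | h
    · rw [h]; simp
    · rw [h]; exact mul_le_mul_of_nonneg_left hαm₁ hl₁
  have hls₂ : l₂ * (μ S₂').toReal ≤ l₂ * (μ G₂).toReal := by
    rcases hsl₂ with h | h
    · rw [h]; simp
    · rw [hμS₂', h]; exact mul_le_mul_of_nonneg_left hαm₂ hl₂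
  have hoptS := hopt S₁ S₂' mS₁ mS₂' hdisjS hfS₁ hfS₂'
  -- the equality chain
  have hfGJ : (∫ v, fG v ∂μ) = ∫ v, Jfun g₁ g₂ l₁ l₂ v ∂μ := by
    have h1' : (∫ v, fG v ∂μ) ≤ ∫ v, Jfun g₁ g₂ l₁ l₂ v ∂μ :=
      integral_mono hifG hiJ hGle
    have h2' : (∫ v, Jfun g₁ g₂ l₁ l₂ v ∂μ) = ∫ v, fS v ∂μ :=
      (integral_congr_ae (Filter.Eventually.of_forall hSeq)).symm
    have h3' : (∫ v, fS v ∂μ) ≤ ∫ v, fG v ∂μ := by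
      rw [hfSint, hfGint]
      have := add_le_add hoptS (add_le_add hls₁ hls₂)
      linarith
    linarith
  have haezero : (fun v => Jfun g₁ g₂ l₁ l₂ v - fG v) =ᵐ[μ] 0 := by
    apply (integral_eq_zero_iff_of_nonneg
      (f := fun v => Jfun g₁ g₂ l₁ l₂ v - fG v)
      (fun v => by simpa using hGle v) (hiJ.sub hifG)).1
    rw [integral_sub hiJ hifG, hfGJ, sub_self]
  have hNne : μ {v | fG v ≠ Jfun g₁ g₂ l₁ l₂ v} = 0 := by
    have h0 : μ {v | ¬ (Jfun g₁ g₂ l₁ l₂ v - fG v = 0)} = 0 := by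
      have := ae_iff.1 haezero
      simpa using this
    apply measure_mono_null _ h0
    intro v hv
    simp only [Set.mem_setOf_eq] at hv ⊢
    intro hc
    exact hv (sub_eq_zero.1 hc).symm
  set N : Set (ℝ×ℝ) := {v | g₁ v - g₂ v = l₂ - l₁} ∪ ({v | g₁ v = -l₁} ∪ {v | g₂ v = -l₂})
    with hNdef
  have hNnull : μ N = 0 := by
    apply le_antisymm _ zero_le
    calc μ N ≤ μ {v | g₁ v - g₂ v = l₂ - l₁} + μ ({v | g₁ v = -l₁} ∪ {v | g₂ v = -l₂}) :=
        measure_union_le _ _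
      _ ≤ μ {v | g₁ v - g₂ v = l₂ - l₁} + (μ {v | g₁ v = -l₁} + μ {v | g₂ v = -l₂}) :=
        add_le_add le_rfl (measure_union_le _ _)
      _ = 0 := by rw [hD, h1, h2]; simp
  -- pointwise structure off bad sets
  have hbad : ∀ v, v ∉ N → fG v = Jfun g₁ g₂ l₁ l₂ v →
      (v ∈ G₁ ↔ v ∈ S₁) ∧ (v ∈ G₂ ↔ v ∈ S₂) := by
    intro v hvN hfj
    simp only [hNdef, Set.mem_union, Set.mem_setOf_eq, not_or] at hvN
    obtain ⟨hne₁, hne₂, hne₃⟩ := hvN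
    have hne₁' : g₁ v + l₁ ≠ g₂ v + l₂ := fun hc => hne₁ (by linarith)
    have hne₂' : g₁ v + l₁ ≠ 0 := fun hc => hne₂ (by linarith)
    have hne₃' : g₂ v + l₂ ≠ 0 := fun hc => hne₃ (by linarith)
    have hfGm₁ : ∀ w ∈ G₁, fG w = g₁ w + l₁ := by
      intro w hw
      have hw2 : w ∉ G₂ := fun hc => (Set.disjoint_left.1 hdisj hw) hc
      simp only [hfGdef]
      rw [Set.indicator_of_mem hw, Set.indicator_of_notMem hw2, add_zero]
    have hfGm₂ : ∀ w ∈ G₂, fG w = g₂ w + l₂ := by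
      intro w hw
      have hw1 : w ∉ G₁ := fun hc => (Set.disjoint_left.1 hdisj hc) hw
      simp only [hfGdef]
      rw [Set.indicator_of_mem hw, Set.indicator_of_notMem hw1, zero_add]
    have hfGm₀ : ∀ w, w ∉ G₁ → w ∉ G₂ → fG w = 0 := by
      intro w hw1 hw2
      simp only [hfGdef]
      rw [Set.indicator_of_notMem hw1, Set.indicator_of_notMem hw2, add_zero]
    constructor
    · constructor
      · intro hvG₁
        rw [hfGm₁ v hvG₁] at hfj
        by_contra hvS₁
        simp only [hS₁def, Tset, Set.mem_setOf_eq, not_and_or, not_le] at hvS₁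
        rcases hvS₁ with hs | hs
        · have := hJb v; rw [← hfj] at this; linarith
        · have := hJ0 v; rw [← hfj] at this; linarith
      · intro hvS₁
        by_contra hvG₁
        rw [hJS₁ v hvS₁] at hfj
        by_cases hv2 : v ∈ G₂
        · rw [hfGm₂ v hv2] at hfj; exact hne₁' hfj.symm
        · rw [hfGm₀ v hvG₁ hv2] at hfj; exact hne₂' hfj.symm
    · constructor
      · intro hvG₂
        rw [hfGm₂ v hvG₂] at hfj
        by_contra hvS₂
        simp only [hS₂def, Tset, Set.mem_setOf_eq, not_and_or, not_le] at hvS₂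
        rcases hvS₂ with hs | hs
        · have := hJa v; rw [← hfj] at this; linarith
        · have := hJ0 v; rw [← hfj] at this; linarith
      · intro hvS₂
        by_contra hvG₂
        rw [hJS₂ v hvS₂] at hfj
        by_cases hv1 : v ∈ G₁
        · rw [hfGm₁ v hv1] at hfj; exact hne₁' hfj
        · rw [hfGm₀ v hv1 hvG₂] at hfj; exact hne₃' hfj.symm
  have hsub₁ : symmDiff G₁ S₁ ⊆ {v | fG v ≠ Jfun g₁ g₂ l₁ l₂ v} ∪ N := by
    intro v hv
    by_cases hfj : fG v = Jfun g₁ g₂ l₁ l₂ v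
    · by_cases hvN : v ∈ N
      · exact Or.inr hvN
      · exfalso
        have := (hbad v hvN hfj).1
        rw [Set.mem_symmDiff] at hv
        rcases hv with ⟨ha, hb⟩ | ⟨ha, hb⟩
        · exact hb (this.1 ha)
        · exact hb (this.2 ha)
    · exact Or.inl hfj
  have hsub₂ : symmDiff G₂ S₂ ⊆ {v | fG v ≠ Jfun g₁ g₂ l₁ l₂ v} ∪ N := by
    intro v hv
    by_cases hfj : fG v = Jfun g₁ g₂ l₁ l₂ v
    · by_cases hvN : v ∈ N
      · exact Or.inr hvN
      · exfalso
        have := (hbad v hvN hfj).2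
        rw [Set.mem_symmDiff] at hv
        rcases hv with ⟨ha, hb⟩ | ⟨ha, hb⟩
        · exact hb (this.1 ha)
        · exact hb (this.2 ha)
    · exact Or.inl hfj
  have hunionnull : μ ({v | fG v ≠ Jfun g₁ g₂ l₁ l₂ v} ∪ N) = 0 := by
    apply le_antisymm _ zero_le
    calc μ ({v | fG v ≠ Jfun g₁ g₂ l₁ l₂ v} ∪ N)
        ≤ μ {v | fG v ≠ Jfun g₁ g₂ l₁ l₂ v} + μ N := measure_union_le _ _
      _ = 0 := by rw [hNne, hNnull]; simp
  exact ⟨measure_mono_null hsub₁ hunionnull, measure_mono_null hsub₂ hunionnull⟩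

/-- **Structure of the optimal static fair allocation (group level).**
Let `μ₁, μ₂` be Borel probability measures on compact intervals `[a₁,b₁]`, `[a₂,b₂]` with
continuous strictly positive densities `f₁, f₂`, let `μ = μ₁ ⊗ μ₂`, let `φ₁, φ₂` be
continuous strictly increasing virtual value functions, and let `α₁, α₂ ≥ 0` with
`α₁ + α₂ ≤ 1`. If the pair of disjoint Borel sets `(G₁, G₂)` with `μ Gᵢ ≥ αᵢ` maximizes
the seller's virtual surplus `W(G₁,G₂) = ∫_{G₁} φ₁(v₁) dμ + ∫_{G₂} φ₂(v₂) dμ` over all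
such pairs, then there exist `η₁, η₂ ≥ 0` and `γ` with `η₂ = η₁ + γ` such that, up to
`μ`-null sets, `G₁ = {φ₁(v₁) ≥ φ₂(v₂) + γ ∧ φ₁(v₁) ≥ -η₁}` and
`G₂ = {φ₂(v₂) ≥ φ₁(v₁) - γ ∧ φ₂(v₂) ≥ -η₂}`. -/
theorem static_fair_allocation_structure
    (a₁ b₁ a₂ b₂ : ℝ) (f₁ f₂ : ℝ → ℝ)
    (hf₁c : ContinuousOn f₁ (Set.Icc a₁ b₁)) (hf₂c : ContinuousOn f₂ (Set.Icc a₂ b₂))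
    (hf₁pos : ∀ x ∈ Set.Icc a₁ b₁, 0 < f₁ x) (hf₂pos : ∀ x ∈ Set.Icc a₂ b₂, 0 < f₂ x)
    (μ₁ μ₂ : Measure ℝ)
    (hμ₁ : μ₁ = (volume.restrict (Set.Icc a₁ b₁)).withDensity
      fun x => ENNReal.ofReal (f₁ x))
    (hμ₂ : μ₂ = (volume.restrict (Set.Icc a₂ b₂)).withDensity
      fun x => ENNReal.ofReal (f₂ x))
    (hp₁ : IsProbabilityMeasure μ₁) (hp₂ : IsProbabilityMeasure μ₂)
    (φ₁ φ₂ : ℝ → ℝ)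
    (hφ₁c : ContinuousOn φ₁ (Set.Icc a₁ b₁)) (hφ₂c : ContinuousOn φ₂ (Set.Icc a₂ b₂))
    (hφ₁m : StrictMonoOn φ₁ (Set.Icc a₁ b₁)) (hφ₂m : StrictMonoOn φ₂ (Set.Icc a₂ b₂))
    (α₁ α₂ : ℝ) (hα₁ : 0 ≤ α₁) (hα₂ : 0 ≤ α₂) (hα : α₁ + α₂ ≤ 1)
    (G₁ G₂ : Set (ℝ × ℝ))
    (hG₁ : MeasurableSet G₁) (hG₂ : MeasurableSet G₂) (hdisj : Disjoint G₁ G₂)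
    (hfair₁ : ENNReal.ofReal α₁ ≤ (μ₁.prod μ₂) G₁)
    (hfair₂ : ENNReal.ofReal α₂ ≤ (μ₁.prod μ₂) G₂)
    (hopt : ∀ G₁' G₂' : Set (ℝ × ℝ), MeasurableSet G₁' → MeasurableSet G₂' →
      Disjoint G₁' G₂' →
      ENNReal.ofReal α₁ ≤ (μ₁.prod μ₂) G₁' → ENNReal.ofReal α₂ ≤ (μ₁.prod μ₂) G₂' →
      (∫ v in G₁', φ₁ v.1 ∂(μ₁.prod μ₂)) + (∫ v in G₂', φ₂ v.2 ∂(μ₁.prod μ₂))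
        ≤ (∫ v in G₁, φ₁ v.1 ∂(μ₁.prod μ₂)) + (∫ v in G₂, φ₂ v.2 ∂(μ₁.prod μ₂))) :
    ∃ η₁ η₂ γ : ℝ, 0 ≤ η₁ ∧ 0 ≤ η₂ ∧ η₂ = η₁ + γ ∧
      (μ₁.prod μ₂)
        (symmDiff G₁ {v : ℝ × ℝ | φ₂ v.2 + γ ≤ φ₁ v.1 ∧ -η₁ ≤ φ₁ v.1}) = 0 ∧
      (μ₁.prod μ₂)
        (symmDiff G₂ {v : ℝ × ℝ | φ₁ v.1 - γ ≤ φ₂ v.2 ∧ -η₂ ≤ φ₂ v.2}) = 0 := by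
  haveI := hp₁; haveI := hp₂
  set μ : Measure (ℝ×ℝ) := μ₁.prod μ₂ with hμdef
  haveI : IsProbabilityMeasure μ := by
    constructor
    rw [hμdef, ← Set.univ_prod_univ, Measure.prod_prod, measure_univ, measure_univ, one_mul]
  -- nonempty intervals
  have hab₁ : a₁ ≤ b₁ := by
    by_contra hc
    push_neg at hc
    have he : Set.Icc a₁ b₁ = ∅ := Set.Icc_eq_empty (not_le.2 hc)
    have : μ₁ Set.univ = 0 := by
      rw [hμ₁, withDensity_apply _ MeasurableSet.univ, Measure.restrict_univ, he,
        Measure.restrict_empty, lintegral_zero_measure]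
    rw [measure_univ] at this
    exact one_ne_zero this
  have hab₂ : a₂ ≤ b₂ := by
    by_contra hc
    push_neg at hc
    have he : Set.Icc a₂ b₂ = ∅ := Set.Icc_eq_empty (not_le.2 hc)
    have : μ₂ Set.univ = 0 := by
      rw [hμ₂, withDensity_apply _ MeasurableSet.univ, Measure.restrict_univ, he,
        Measure.restrict_empty, lintegral_zero_measure]
    rw [measure_univ] at this
    exact one_ne_zero this
  -- clamped virtual value functions
  set ψ₁ : ℝ → ℝ := fun x => φ₁ (max a₁ (min x b₁)) with hψ₁def
  set ψ₂ : ℝ → ℝ := fun y => φ₂ (max a₂ (min y b₂)) with hψ₂def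
  have hclamp₁ : ∀ x, max a₁ (min x b₁) ∈ Set.Icc a₁ b₁ :=
    fun x => ⟨le_max_left _ _, max_le hab₁ (min_le_right _ _)⟩
  have hclamp₂ : ∀ y, max a₂ (min y b₂) ∈ Set.Icc a₂ b₂ :=
    fun y => ⟨le_max_left _ _, max_le hab₂ (min_le_right _ _)⟩
  have hclampid₁ : ∀ x ∈ Set.Icc a₁ b₁, max a₁ (min x b₁) = x := by
    intro x hx
    rw [min_eq_left hx.2, max_eq_right hx.1]
  have hclampid₂ : ∀ y ∈ Set.Icc a₂ b₂, max a₂ (min y b₂) = y := by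
    intro y hy
    rw [min_eq_left hy.2, max_eq_right hy.1]
  have hψ₁cont : Continuous ψ₁ :=
    hφ₁c.comp_continuous (continuous_const.max (continuous_id.min continuous_const)) hclamp₁
  have hψ₂cont : Continuous ψ₂ :=
    hφ₂c.comp_continuous (continuous_const.max (continuous_id.min continuous_const)) hclamp₂
  set g₁ : ℝ×ℝ → ℝ := fun v => ψ₁ v.1 with hg₁def
  set g₂ : ℝ×ℝ → ℝ := fun v => ψ₂ v.2 with hg₂def
  have hg₁cont : Continuous g₁ := hψ₁cont.comp continuous_fst
  have hg₂cont : Continuous g₂ := hψ₂cont.comp continuous_snd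
  -- bounds
  set C₁ : ℝ := max |φ₁ a₁| |φ₁ b₁| with hC₁def
  set C₂ : ℝ := max |φ₂ a₂| |φ₂ b₂| with hC₂def
  have hmono₁ := hφ₁m.monotoneOn
  have hmono₂ := hφ₂m.monotoneOn
  have hb₁ : ∀ v : ℝ×ℝ, |g₁ v| ≤ C₁ := by
    intro v
    have hlo := hmono₁ (Set.left_mem_Icc.2 hab₁) (hclamp₁ v.1) (le_max_left _ _)
    have hhi := hmono₁ (hclamp₁ v.1) (Set.right_mem_Icc.2 hab₁) (hclamp₁ v.1).2
    rw [abs_le]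
    constructor
    · calc -C₁ ≤ -|φ₁ a₁| := by simp [hC₁def, le_max_left]
        _ ≤ φ₁ a₁ := neg_abs_le _
        _ ≤ g₁ v := hlo
    · calc g₁ v ≤ φ₁ b₁ := hhi
        _ ≤ |φ₁ b₁| := le_abs_self _
        _ ≤ C₁ := le_max_right _ _
  have hb₂ : ∀ v : ℝ×ℝ, |g₂ v| ≤ C₂ := by
    intro v
    have hlo := hmono₂ (Set.left_mem_Icc.2 hab₂) (hclamp₂ v.2) (le_max_left _ _)
    have hhi := hmono₂ (hclamp₂ v.2) (Set.right_mem_Icc.2 hab₂) (hclamp₂ v.2).2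
    rw [abs_le]
    constructor
    · calc -C₂ ≤ -|φ₂ a₂| := by simp [hC₂def, le_max_left]
        _ ≤ φ₂ a₂ := neg_abs_le _
        _ ≤ g₂ v := hlo
    · calc g₂ v ≤ φ₂ b₂ := hhi
        _ ≤ |φ₂ b₂| := le_abs_self _
        _ ≤ C₂ := le_max_right _ _
  -- null sets on ℝ
  have hμ₁ac : μ₁ ≪ volume := by
    rw [hμ₁]
    exact (withDensity_absolutelyContinuous _ _).trans
      (Measure.absolutelyContinuous_of_le Measure.restrict_le_self)
  have hμ₂ac : μ₂ ≪ volume := by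
    rw [hμ₂]
    exact (withDensity_absolutelyContinuous _ _).trans
      (Measure.absolutelyContinuous_of_le Measure.restrict_le_self)
  have hμ₁c : μ₁ (Set.Icc a₁ b₁)ᶜ = 0 := by
    rw [hμ₁, withDensity_apply _ measurableSet_Icc.compl,
      Measure.restrict_restrict measurableSet_Icc.compl, Set.compl_inter_self,
      Measure.restrict_empty, lintegral_zero_measure]
  have hμ₂c : μ₂ (Set.Icc a₂ b₂)ᶜ = 0 := by
    rw [hμ₂, withDensity_apply _ measurableSet_Icc.compl,
      Measure.restrict_restrict measurableSet_Icc.compl, Set.compl_inter_self,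
      Measure.restrict_empty, lintegral_zero_measure]
  have hμ₁null : ∀ c : ℝ, μ₁ {x | ψ₁ x = c} = 0 := by
    intro c
    have hss : ({x | ψ₁ x = c} ∩ Set.Icc a₁ b₁).Subsingleton := by
      rintro x ⟨hx, hxI⟩ y ⟨hy, hyI⟩
      apply hφ₁m.injOn hxI hyI
      have ex : φ₁ x = c := by rw [← hx]; simp only [hψ₁def]; rw [hclampid₁ x hxI]
      have ey : φ₁ y = c := by rw [← hy]; simp only [hψ₁def]; rw [hclampid₁ y hyI]
      rw [ex, ey]
    have h0 : μ₁ ({x | ψ₁ x = c} ∩ Set.Icc a₁ b₁) = 0 := hμ₁ac (hss.measure_zero volume)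
    apply le_antisymm _ zero_le
    calc μ₁ {x | ψ₁ x = c}
        ≤ μ₁ (({x | ψ₁ x = c} ∩ Set.Icc a₁ b₁) ∪ (Set.Icc a₁ b₁)ᶜ) := measure_mono (fun x hx => by
          by_cases hxI : x ∈ Set.Icc a₁ b₁
          · exact Or.inl ⟨hx, hxI⟩
          · exact Or.inr hxI)
      _ ≤ μ₁ ({x | ψ₁ x = c} ∩ Set.Icc a₁ b₁) + μ₁ (Set.Icc a₁ b₁)ᶜ := measure_union_le _ _
      _ = 0 := by rw [h0, hμ₁c, add_zero]
  have hμ₂null : ∀ c : ℝ, μ₂ {y | ψ₂ y = c} = 0 := by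
    intro c
    have hss : ({y | ψ₂ y = c} ∩ Set.Icc a₂ b₂).Subsingleton := by
      rintro x ⟨hx, hxI⟩ y ⟨hy, hyI⟩
      apply hφ₂m.injOn hxI hyI
      have ex : φ₂ x = c := by rw [← hx]; simp only [hψ₂def]; rw [hclampid₂ x hxI]
      have ey : φ₂ y = c := by rw [← hy]; simp only [hψ₂def]; rw [hclampid₂ y hyI]
      rw [ex, ey]
    have h0 : μ₂ ({y | ψ₂ y = c} ∩ Set.Icc a₂ b₂) = 0 := hμ₂ac (hss.measure_zero volume)
    apply le_antisymm _ zero_le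
    calc μ₂ {y | ψ₂ y = c}
        ≤ μ₂ (({y | ψ₂ y = c} ∩ Set.Icc a₂ b₂) ∪ (Set.Icc a₂ b₂)ᶜ) := measure_mono (fun y hy => by
          by_cases hyI : y ∈ Set.Icc a₂ b₂
          · exact Or.inl ⟨hy, hyI⟩
          · exact Or.inr hyI)
      _ ≤ μ₂ ({y | ψ₂ y = c} ∩ Set.Icc a₂ b₂) + μ₂ (Set.Icc a₂ b₂)ᶜ := measure_union_le _ _
      _ = 0 := by rw [h0, hμ₂c, add_zero]
  -- null sets on the product
  set R : Set (ℝ×ℝ) := Set.Icc a₁ b₁ ×ˢ Set.Icc a₂ b₂ with hRdef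
  have hRc : μ Rᶜ = 0 := by
    apply le_antisymm _ zero_le
    calc μ Rᶜ ≤ μ (((Set.Icc a₁ b₁)ᶜ ×ˢ (Set.univ : Set ℝ))
          ∪ ((Set.univ : Set ℝ) ×ˢ (Set.Icc a₂ b₂)ᶜ)) := measure_mono (fun v hv => by
        simp only [hRdef, Set.mem_compl_iff, Set.mem_prod, not_and_or] at hv
        rcases hv with hv | hv
        · exact Or.inl ⟨hv, Set.mem_univ _⟩
        · exact Or.inr ⟨Set.mem_univ _, hv⟩)
      _ ≤ μ ((Set.Icc a₁ b₁)ᶜ ×ˢ (Set.univ : Set ℝ))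
          + μ ((Set.univ : Set ℝ) ×ˢ (Set.Icc a₂ b₂)ᶜ) := measure_union_le _ _
      _ = 0 := by
        rw [hμdef, Measure.prod_prod, Measure.prod_prod, hμ₁c, hμ₂c]
        simp
  have h1 : ∀ c, μ {v : ℝ×ℝ | g₁ v = c} = 0 := by
    intro c
    have : {v : ℝ×ℝ | g₁ v = c} = {x | ψ₁ x = c} ×ˢ (Set.univ : Set ℝ) := by
      ext v; simp [hg₁def, Set.mem_prod]
    rw [this, hμdef, Measure.prod_prod, hμ₁null c, zero_mul]
  have h2 : ∀ c, μ {v : ℝ×ℝ | g₂ v = c} = 0 := by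
    intro c
    have : {v : ℝ×ℝ | g₂ v = c} = (Set.univ : Set ℝ) ×ˢ {y | ψ₂ y = c} := by
      ext v; simp [hg₂def, Set.mem_prod]
    rw [this, hμdef, Measure.prod_prod, hμ₂null c, mul_zero]
  have hD : ∀ c, μ {v : ℝ×ℝ | g₁ v - g₂ v = c} = 0 := by
    intro c
    have hmeas : MeasurableSet {v : ℝ×ℝ | g₁ v - g₂ v = c} :=
      (isClosed_eq (by fun_prop) continuous_const).measurableSet
    rw [hμdef]
    rw [Measure.measure_prod_null hmeas]
    apply Filter.Eventually.of_forall
    intro x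
    have : (Prod.mk x ⁻¹' {v : ℝ×ℝ | g₁ v - g₂ v = c}) = {y | ψ₂ y = ψ₁ x - c} := by
      ext y
      simp only [Set.mem_preimage, Set.mem_setOf_eq, hg₁def, hg₂def]
      constructor <;> intro <;> linarith
    simp only [this]
    exact hμ₂null _
  -- integral translation
  have hW₁ : ∀ A : Set (ℝ×ℝ), (∫ v in A, φ₁ v.1 ∂μ) = ∫ v in A, g₁ v ∂μ := by
    intro A
    apply integral_congr_ae
    have hae : ∀ᵐ v ∂(μ.restrict A), v ∈ R := by
      rw [ae_iff]
      exact measure_mono_null (fun v hv => by simpa using hv)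
        (measure_mono_null (fun v hv => hv) (le_antisymm
          (le_trans (Measure.restrict_le_self _) hRc.le) zero_le))
    filter_upwards [hae] with v hv
    simp only [hg₁def, hψ₁def]
    rw [hclampid₁ v.1 hv.1]
  have hW₂ : ∀ A : Set (ℝ×ℝ), (∫ v in A, φ₂ v.2 ∂μ) = ∫ v in A, g₂ v ∂μ := by
    intro A
    apply integral_congr_ae
    have hae : ∀ᵐ v ∂(μ.restrict A), v ∈ R := by
      rw [ae_iff]
      exact measure_mono_null (fun v hv => by simpa using hv)
        (measure_mono_null (fun v hv => hv) (le_antisymm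
          (le_trans (Measure.restrict_le_self _) hRc.le) zero_le))
    filter_upwards [hae] with v hv
    simp only [hg₂def, hψ₂def]
    rw [hclampid₂ v.2 hv.2]
  have hoptg : ∀ A B : Set (ℝ×ℝ), MeasurableSet A → MeasurableSet B → Disjoint A B →
      ENNReal.ofReal α₁ ≤ μ A → ENNReal.ofReal α₂ ≤ μ B →
      (∫ v in A, g₁ v ∂μ) + (∫ v in B, g₂ v ∂μ)
        ≤ (∫ v in G₁, g₁ v ∂μ) + (∫ v in G₂, g₂ v ∂μ) := by
    intro A B mA mB hAB hA hB
    rw [← hW₁ A, ← hW₂ B, ← hW₁ G₁, ← hW₂ G₂]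
    exact hopt A B mA mB hAB hA hB
  -- KKT multipliers
  obtain ⟨l₁, l₂, hl₁, hl₂, hfS₁, hfS₂, hsl₁, hsl₂⟩ :
      ∃ l₁ l₂ : ℝ, 0 ≤ l₁ ∧ 0 ≤ l₂ ∧
        ENNReal.ofReal α₁ ≤ μ (Tset g₁ g₂ l₁ l₂) ∧
        ENNReal.ofReal α₂ ≤ μ (Tset g₂ g₁ l₂ l₁) ∧
        (l₁ = 0 ∨ (μ (Tset g₁ g₂ l₁ l₂)).toReal = α₁) ∧
        (l₂ = 0 ∨ (μ (Tset g₂ g₁ l₂ l₁)).toReal = α₂) := by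
    rcases lt_or_eq_of_le hα with hlt | heq
    · exact kkt_exists_lt μ g₁ g₂ hg₁cont hg₂cont C₁ C₂ hb₁ hb₂ hD h1 h2 α₁ α₂ hα₁ hα₂ hlt
    · exact kkt_exists_eq μ g₁ g₂ hg₁cont hg₂cont C₁ C₂ hb₁ hb₂ hD α₁ α₂ hα₁ hα₂ heq
  obtain ⟨hs₁, hs₂⟩ := sfa_uniqueness μ g₁ g₂ hg₁cont hg₂cont C₁ C₂ hb₁ hb₂ hD h1 h2
    α₁ α₂ hα₁ hα₂ l₁ l₂ hl₁ hl₂ hfS₁ hfS₂ hsl₁ hsl₂ G₁ G₂ hG₁ hG₂ hdisj hfair₁ hfair₂ hoptg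
  refine ⟨l₁, l₂, l₂ - l₁, hl₁, hl₂, by ring, ?_, ?_⟩
  · have hsubset : symmDiff G₁ {v : ℝ×ℝ | φ₂ v.2 + (l₂ - l₁) ≤ φ₁ v.1 ∧ -l₁ ≤ φ₁ v.1}
        ⊆ symmDiff G₁ (Tset g₁ g₂ l₁ l₂) ∪ Rᶜ := by
      intro v hv
      by_cases hvR : v ∈ R
      · left
        have hiff : (v ∈ {v : ℝ×ℝ | φ₂ v.2 + (l₂ - l₁) ≤ φ₁ v.1 ∧ -l₁ ≤ φ₁ v.1})
            ↔ v ∈ Tset g₁ g₂ l₁ l₂ := by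
          have e1 : g₁ v = φ₁ v.1 := by
            simp only [hg₁def, hψ₁def]; rw [hclampid₁ v.1 hvR.1]
          have e2 : g₂ v = φ₂ v.2 := by
            simp only [hg₂def, hψ₂def]; rw [hclampid₂ v.2 hvR.2]
          simp only [Set.mem_setOf_eq, Tset, e1, e2]
          constructor
          · rintro ⟨hx, hy⟩; exact ⟨by linarith, by linarith⟩
          · rintro ⟨hx, hy⟩; exact ⟨by linarith, by linarith⟩
        rw [Set.mem_symmDiff] at hv ⊢
        rcases hv with ⟨ha, hb⟩ | ⟨ha, hb⟩
        · exact Or.inl ⟨ha, fun hc => hb (hiff.2 hc)⟩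
        · exact Or.inr ⟨hiff.1 ha, hb⟩
      · exact Or.inr hvR
    apply measure_mono_null hsubset
    apply le_antisymm _ zero_le
    calc μ (symmDiff G₁ (Tset g₁ g₂ l₁ l₂) ∪ Rᶜ)
        ≤ μ (symmDiff G₁ (Tset g₁ g₂ l₁ l₂)) + μ Rᶜ := measure_union_le _ _
      _ = 0 := by rw [hs₁, hRc, add_zero]
  · have hsubset : symmDiff G₂ {v : ℝ×ℝ | φ₁ v.1 - (l₂ - l₁) ≤ φ₂ v.2 ∧ -l₂ ≤ φ₂ v.2}
        ⊆ symmDiff G₂ (Tset g₂ g₁ l₂ l₁) ∪ Rᶜ := by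
      intro v hv
      by_cases hvR : v ∈ R
      · left
        have hiff : (v ∈ {v : ℝ×ℝ | φ₁ v.1 - (l₂ - l₁) ≤ φ₂ v.2 ∧ -l₂ ≤ φ₂ v.2})
            ↔ v ∈ Tset g₂ g₁ l₂ l₁ := by
          have e1 : g₁ v = φ₁ v.1 := by
            simp only [hg₁def, hψ₁def]; rw [hclampid₁ v.1 hvR.1]
          have e2 : g₂ v = φ₂ v.2 := by
            simp only [hg₂def, hψ₂def]; rw [hclampid₂ v.2 hvR.2]
          simp only [Set.mem_setOf_eq, Tset, e1, e2]
          constructor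
          · rintro ⟨hx, hy⟩; exact ⟨by linarith, by linarith⟩
          · rintro ⟨hx, hy⟩; exact ⟨by linarith, by linarith⟩
        rw [Set.mem_symmDiff] at hv ⊢
        rcases hv with ⟨ha, hb⟩ | ⟨ha, hb⟩
        · exact Or.inl ⟨ha, fun hc => hb (hiff.2 hc)⟩
        · exact Or.inr ⟨hiff.1 ha, hb⟩
      · exact Or.inr hvR
    apply measure_mono_null hsubset
    apply le_antisymm _ zero_le
    calc μ (symmDiff G₂ (Tset g₂ g₁ l₂ l₁) ∪ Rᶜ)
        ≤ μ (symmDiff G₂ (Tset g₂ g₁ l₂ l₁)) + μ Rᶜ := measure_union_le _ _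
      _ = 0 := by rw [hs₂, hRc, add_zero]
end

section
/- Let δ ∈ (0,1), let T₀ ≤ T be positive integers, let ε ∈ (0,1) with δ^{T₀} ≤ ε, let α be a real number with ε ≤ α ≤ 1, and let x₁, …, x_T ∈ [0,1] satisfy Σ_{t=1}^{T} δ^{t−1} x_t ≥ α · Σ_{t=0}^{T−1} δ^t. Then Σ_{t=1}^{T₀} δ^{t−1} x_t ≥ (α − ε) · Σ_{t=0}^{T₀−1} δ^t. -/
/-- **Early stopping preserves approximate fairness.**
If a `[0,1]`-valued allocation sequence satisfies the discounted fairness constraint at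
level `α` over `T` rounds, and `T₀ ≤ T` is such that `δ^{T₀} ≤ ε`, then the truncation to
the first `T₀` rounds satisfies the discounted fairness constraint at level `α - ε`. -/
theorem early_stopping_fairness
    (δ ε α : ℝ) (hδ : δ ∈ Set.Ioo (0 : ℝ) 1) (hε : ε ∈ Set.Ioo (0 : ℝ) 1)
    (T₀ T : ℕ) (hT₀ : 0 < T₀) (hT₀T : T₀ ≤ T)
    (hδT₀ : δ ^ T₀ ≤ ε) (hεα : ε ≤ α) (hα : α ≤ 1)
    (x : ℕ → ℝ) (hx : ∀ t, 1 ≤ t → t ≤ T → x t ∈ Set.Icc (0 : ℝ) 1)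
    (hfair : α * ∑ t ∈ Finset.range T, δ ^ t ≤ ∑ t ∈ Finset.range T, δ ^ t * x (t + 1)) :
    (α - ε) * ∑ t ∈ Finset.range T₀, δ ^ t ≤ ∑ t ∈ Finset.range T₀, δ ^ t * x (t + 1) := by
  obtain ⟨hδ0, hδ1⟩ := hδ
  obtain ⟨hε0, hε1⟩ := hε
  have h1δ : (0:ℝ) < 1 - δ := by linarith
  have hsplit : ∑ t ∈ Finset.range T, δ ^ t * x (t + 1)
      = ∑ t ∈ Finset.range T₀, δ ^ t * x (t + 1)
        + ∑ t ∈ Finset.Ico T₀ T, δ ^ t * x (t + 1) :=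
    (Finset.sum_range_add_sum_Ico _ hT₀T).symm
  have hsplit2 : ∑ t ∈ Finset.range T, δ ^ t
      = ∑ t ∈ Finset.range T₀, δ ^ t + ∑ t ∈ Finset.Ico T₀ T, δ ^ t :=
    (Finset.sum_range_add_sum_Ico _ hT₀T).symm
  have htail : ∑ t ∈ Finset.Ico T₀ T, δ ^ t * x (t + 1) ≤ ∑ t ∈ Finset.Ico T₀ T, δ ^ t := by
    apply Finset.sum_le_sum
    intro t ht
    simp only [Finset.mem_Ico] at ht
    have hxt := hx (t + 1) (by omega) (by omega)
    nlinarith [pow_pos hδ0 t, hxt.2]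
  have hgeo : ∀ n : ℕ, ∑ t ∈ Finset.range n, δ ^ t = (1 - δ ^ n) / (1 - δ) := by
    intro n
    rw [geom_sum_eq (ne_of_lt hδ1)]
    rw [div_eq_div_iff (by intro h; apply ne_of_lt hδ1; linarith) (ne_of_gt h1δ)]
    ring
  have hST := hgeo T
  have hST₀ := hgeo T₀
  have hδT : δ ^ T ≤ δ ^ T₀ := pow_le_pow_of_le_one (le_of_lt hδ0) (le_of_lt hδ1) hT₀T
  have hδT₀pos : 0 < δ ^ T₀ := pow_pos hδ0 T₀
  have hδTpos : 0 < δ ^ T := pow_pos hδ0 T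
  have hkey : (1 - α) * (1 - δ ^ T) ≤ (1 - α + ε) * (1 - δ ^ T₀) := by nlinarith
  have h1 : α * ∑ t ∈ Finset.range T, δ ^ t - ∑ t ∈ Finset.Ico T₀ T, δ ^ t
      ≤ ∑ t ∈ Finset.range T₀, δ ^ t * x (t + 1) := by linarith
  have hIco : ∑ t ∈ Finset.Ico T₀ T, δ ^ t
      = ∑ t ∈ Finset.range T, δ ^ t - ∑ t ∈ Finset.range T₀, δ ^ t := by linarith
  rw [hIco, hST, hST₀] at h1
  have heq : α * ((1 - δ ^ T) / (1 - δ))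
      - ((1 - δ ^ T) / (1 - δ) - (1 - δ ^ T₀) / (1 - δ))
      = (α * (1 - δ ^ T) - (1 - δ ^ T) + (1 - δ ^ T₀)) / (1 - δ) := by ring
  rw [heq] at h1
  have h2 : (α - ε) * (1 - δ ^ T₀) ≤ α * (1 - δ ^ T) - (1 - δ ^ T) + (1 - δ ^ T₀) := by
    nlinarith [hkey]
  calc (α - ε) * ∑ t ∈ Finset.range T₀, δ ^ t
      = ((α - ε) * (1 - δ ^ T₀)) / (1 - δ) := by rw [hST₀]; ring
    _ ≤ (α * (1 - δ ^ T) - (1 - δ ^ T) + (1 - δ ^ T₀)) / (1 - δ) :=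
        by gcongr
    _ ≤ _ := h1
end

section
/- Let δ ∈ (0,1), let T₀ ≤ T be positive integers, let ε ∈ (0,1) with δ^{T₀} ≤ ε, let α be a real number with ε ≤ α ≤ 1, and let x₁, …, x_T ∈ [0,1] satisfy Σ_{t=1}^{T₀} δ^{t−1} x_t ≥ (α − ε) · Σ_{t=0}^{T₀−1} δ^t. Then Σ_{t=1}^{T} δ^{t−1} x_t ≥ (1 − ε)(α − ε) · Σ_{t=0}^{T−1} δ^t. -/
/-- **Fairness guarantee of the early-stopping approximation.**
If a `[0,1]`-valued allocation sequence satisfies the discounted fairness constraint at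
level `α - ε` over the first `T₀` rounds, where `δ^{T₀} ≤ ε` and `T₀ ≤ T`, then over all
`T` rounds it satisfies the discounted fairness constraint at level `(1 - ε)(α - ε)`. -/
theorem approximation_fairness_guarantee
    (δ ε α : ℝ) (hδ : δ ∈ Set.Ioo (0 : ℝ) 1) (hε : ε ∈ Set.Ioo (0 : ℝ) 1)
    (T₀ T : ℕ) (hT₀ : 0 < T₀) (hT₀T : T₀ ≤ T)
    (hδT₀ : δ ^ T₀ ≤ ε) (hεα : ε ≤ α) (hα : α ≤ 1)
    (x : ℕ → ℝ) (hx : ∀ t, 1 ≤ t → t ≤ T → x t ∈ Set.Icc (0 : ℝ) 1)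
    (hfair : (α - ε) * ∑ t ∈ Finset.range T₀, δ ^ t
      ≤ ∑ t ∈ Finset.range T₀, δ ^ t * x (t + 1)) :
    (1 - ε) * (α - ε) * ∑ t ∈ Finset.range T, δ ^ t
      ≤ ∑ t ∈ Finset.range T, δ ^ t * x (t + 1) := by
  obtain ⟨hδ0, hδ1⟩ := hδ
  obtain ⟨hε0, hε1⟩ := hε
  have hαε : 0 ≤ α - ε := by linarith
  -- step 1: partial sum extends
  have hmono : ∑ t ∈ Finset.range T₀, δ ^ t * x (t + 1)
      ≤ ∑ t ∈ Finset.range T, δ ^ t * x (t + 1) := by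
    apply Finset.sum_le_sum_of_subset_of_nonneg (Finset.range_subset_range.2 hT₀T)
    intro t ht _
    have ht' := Finset.mem_range.1 ht
    have := (hx (t + 1) (Nat.le_add_left 1 t) ht').1
    positivity
  -- step 2: (1-ε) * S_T ≤ S_{T₀}
  have hgeo : (1 - ε) * ∑ t ∈ Finset.range T, δ ^ t
      ≤ ∑ t ∈ Finset.range T₀, δ ^ t := by
    have hne : δ ≠ 1 := ne_of_lt hδ1
    rw [geom_sum_eq hne, geom_sum_eq hne]
    have hd : δ - 1 < 0 := by linarith
    have hδT : δ ^ T ≤ δ ^ T₀ := pow_le_pow_of_le_one (le_of_lt hδ0) (le_of_lt hδ1) hT₀T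
    have key : δ ^ T₀ - 1 ≤ (1 - ε) * (δ ^ T - 1) := by nlinarith [pow_pos hδ0 T]
    calc (1 - ε) * ((δ ^ T - 1) / (δ - 1)) = (1 - ε) * (δ ^ T - 1) / (δ - 1) := by ring
      _ ≤ (δ ^ T₀ - 1) / (δ - 1) := by
          exact div_le_div_of_nonpos_of_le (le_of_lt hd) key
  calc (1 - ε) * (α - ε) * ∑ t ∈ Finset.range T, δ ^ t
      = (α - ε) * ((1 - ε) * ∑ t ∈ Finset.range T, δ ^ t) := by ring
    _ ≤ (α - ε) * ∑ t ∈ Finset.range T₀, δ ^ t := by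
        apply mul_le_mul_of_nonneg_left hgeo hαε
    _ ≤ ∑ t ∈ Finset.range T₀, δ ^ t * x (t + 1) := hfair
    _ ≤ _ := hmono
end

section
/- Let δ ∈ (0,1), let β, ε ∈ (0,1), let ℓ, m be positive integers with δ^ℓ ≥ 1 − β, set T₀ = mℓ, let T ≥ T₀ be an integer, assume δ^{T₀} ≤ ε, and let α be a real number with ε ≤ α ≤ 1. Suppose x₁, …, x_T ∈ [0,1] satisfy the bucket-discounted fairness constraint Σ_{k=0}^{m−1} δ^{ℓk} · ( Σ_{t=kℓ+1}^{(k+1)ℓ} x_t ) ≥ (1 − β)(α − ε) · ℓ · Σ_{k=0}^{m−1} δ^{ℓk}. Then Σ_{t=1}^{T} δ^{t−1} x_t ≥ (1 − ε)(1 − β)²(α − ε) · Σ_{t=0}^{T−1} δ^t. -/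
lemma sum_range_mul_bucket (f : ℕ → ℝ) (m ℓ : ℕ) :
    ∑ t ∈ Finset.range (m * ℓ), f t
      = ∑ k ∈ Finset.range m, ∑ j ∈ Finset.range ℓ, f (k * ℓ + j) := by
  induction m with
  | zero => simp
  | succ n ih =>
    rw [Finset.sum_range_succ, ← ih, Nat.succ_mul, Finset.sum_range_add]

/-- **Fairness guarantee of the bucketed (constant-factor) approximation scheme.**
Suppose the first `T₀ = m·ℓ` rounds are partitioned into `m` buckets of `ℓ` rounds with
`δ^ℓ ≥ 1 - β` and `δ^{T₀} ≤ ε`, and the `[0,1]`-valued allocation sequence `x` satisfies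
the bucket-discounted fairness constraint at level `(1 - β)(α - ε)`. Then over all
`T ≥ T₀` rounds the true discounted fairness constraint holds at level
`(1 - ε)(1 - β)²(α - ε)`. -/
theorem bucketed_approximation_fairness
    (δ β ε α : ℝ) (hδ : δ ∈ Set.Ioo (0 : ℝ) 1) (hβ : β ∈ Set.Ioo (0 : ℝ) 1)
    (hε : ε ∈ Set.Ioo (0 : ℝ) 1)
    (ℓ m T₀ T : ℕ) (hℓ : 0 < ℓ) (hm : 0 < m) (hδℓ : 1 - β ≤ δ ^ ℓ)
    (hT₀ : T₀ = m * ℓ) (hT₀T : T₀ ≤ T) (hδT₀ : δ ^ T₀ ≤ ε) (hεα : ε ≤ α) (hα : α ≤ 1)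
    (x : ℕ → ℝ) (hx : ∀ t, 1 ≤ t → t ≤ T → x t ∈ Set.Icc (0 : ℝ) 1)
    (hfair : (1 - β) * (α - ε) * (ℓ : ℝ) * ∑ k ∈ Finset.range m, δ ^ (ℓ * k)
      ≤ ∑ k ∈ Finset.range m, δ ^ (ℓ * k) * ∑ j ∈ Finset.range ℓ, x (k * ℓ + j + 1)) :
    (1 - ε) * (1 - β) ^ 2 * (α - ε) * ∑ t ∈ Finset.range T, δ ^ t
      ≤ ∑ t ∈ Finset.range T, δ ^ t * x (t + 1) := by
  obtain ⟨hδ0, hδ1⟩ := hδ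
  obtain ⟨hβ0, hβ1⟩ := hβ
  obtain ⟨hε0, hε1⟩ := hε
  have hβ' : (0:ℝ) < 1 - β := by linarith
  have hαε : (0:ℝ) ≤ α - ε := by linarith
  have hδpow : ∀ n : ℕ, (0:ℝ) < δ ^ n := fun n => pow_pos hδ0 n
  set S : ℝ := ∑ k ∈ Finset.range m, δ ^ (ℓ * k) with hS
  set F : ℝ := ∑ k ∈ Finset.range m, δ ^ (ℓ * k) * ∑ j ∈ Finset.range ℓ, x (k * ℓ + j + 1)
    with hF
  have hxnn : ∀ t, t < T → 0 ≤ x (t+1) := fun t ht => (hx (t+1) (by omega) (by omega)).1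
  have hidx : ∀ k j, k < m → j < ℓ → k * ℓ + j < T := by
    intro k j hk hj
    have : k * ℓ + j < (k+1) * ℓ := by
      have : (k+1) * ℓ = k * ℓ + ℓ := by ring
      omega
    have h2 : (k+1) * ℓ ≤ m * ℓ := Nat.mul_le_mul_right ℓ hk
    omega
  -- Step A : extend sum from T₀ to T
  have stepA : ∑ t ∈ Finset.range T₀, δ ^ t * x (t+1)
      ≤ ∑ t ∈ Finset.range T, δ ^ t * x (t+1) := by
    apply Finset.sum_le_sum_of_subset_of_nonneg (Finset.range_subset_range.mpr hT₀T)
    intro i hi _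
    exact mul_nonneg (hδpow i).le (hxnn i (Finset.mem_range.mp hi))
  -- bucket decomposition of the T₀ sum
  have hsplit : ∑ t ∈ Finset.range T₀, δ ^ t * x (t+1)
      = ∑ k ∈ Finset.range m, ∑ j ∈ Finset.range ℓ, δ ^ (k*ℓ+j) * x (k*ℓ+j+1) := by
    rw [hT₀]; exact sum_range_mul_bucket _ m ℓ
  -- Step B : bucketed objective lower-bounds the T₀ sum up to (1-β)
  have stepB : (1-β) * F ≤ ∑ t ∈ Finset.range T₀, δ ^ t * x (t+1) := by
    rw [hsplit, hF, Finset.mul_sum]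
    apply Finset.sum_le_sum
    intro k hk
    rw [← mul_assoc, Finset.mul_sum]
    apply Finset.sum_le_sum
    intro j hj
    have hk' := Finset.mem_range.mp hk
    have hj' := Finset.mem_range.mp hj
    have hx0 : 0 ≤ x (k*ℓ+j+1) := hxnn _ (hidx k j hk' hj')
    have hpow : (1-β) * δ ^ (ℓ*k) ≤ δ ^ (k*ℓ+j) := by
      have h1 : δ ^ ℓ ≤ δ ^ j := pow_le_pow_of_le_one hδ0.le hδ1.le (by omega)
      calc (1-β) * δ ^ (ℓ*k) ≤ δ^ℓ * δ^(ℓ*k) :=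
            mul_le_mul_of_nonneg_right hδℓ (hδpow _).le
        _ ≤ δ^j * δ^(ℓ*k) := mul_le_mul_of_nonneg_right h1 (hδpow _).le
        _ = δ^(k*ℓ+j) := by rw [← pow_add]; ring_nf
    exact mul_le_mul_of_nonneg_right hpow hx0
  -- Step C : ∑_{t<T₀} δ^t ≤ ℓ * S
  have stepC : ∑ t ∈ Finset.range T₀, δ ^ t ≤ (ℓ : ℝ) * S := by
    have : ∑ t ∈ Finset.range T₀, δ ^ t
        = ∑ k ∈ Finset.range m, ∑ j ∈ Finset.range ℓ, δ ^ (k*ℓ+j) := by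
      rw [hT₀]; exact sum_range_mul_bucket _ m ℓ
    rw [this, hS, Finset.mul_sum]
    apply Finset.sum_le_sum
    intro k hk
    have : ∑ j ∈ Finset.range ℓ, δ ^ (k*ℓ+j) ≤ ∑ _j ∈ Finset.range ℓ, δ ^ (ℓ*k) := by
      apply Finset.sum_le_sum
      intro j hj
      exact pow_le_pow_of_le_one hδ0.le hδ1.le (by rw [Nat.mul_comm ℓ k]; omega)
    simpa [Finset.sum_const, mul_comm] using this
  -- Step D : (1-ε) ∑_{t<T} δ^t ≤ ∑_{t<T₀} δ^t
  have stepD : (1-ε) * ∑ t ∈ Finset.range T, δ ^ t ≤ ∑ t ∈ Finset.range T₀, δ ^ t := by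
    have hdecomp : ∑ t ∈ Finset.range T, δ ^ t
        = ∑ t ∈ Finset.range T₀, δ ^ t + ∑ j ∈ Finset.range (T - T₀), δ ^ (T₀ + j) := by
      have hTT : T₀ + (T - T₀) = T := by omega
      conv_lhs => rw [← hTT]
      rw [Finset.sum_range_add]
    have htail : ∑ j ∈ Finset.range (T - T₀), δ ^ (T₀ + j)
        ≤ ε * ∑ t ∈ Finset.range T, δ ^ t := by
      have h1 : ∑ j ∈ Finset.range (T - T₀), δ ^ (T₀ + j)
          ≤ ∑ j ∈ Finset.range (T - T₀), ε * δ ^ j := by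
        apply Finset.sum_le_sum
        intro j hj
        rw [pow_add]
        exact mul_le_mul_of_nonneg_right hδT₀ (hδpow j).le
      have h2 : ∑ j ∈ Finset.range (T - T₀), δ ^ j ≤ ∑ t ∈ Finset.range T, δ ^ t := by
        apply Finset.sum_le_sum_of_subset_of_nonneg (Finset.range_subset_range.mpr (by omega))
        intro i _ _; exact (hδpow i).le
      calc ∑ j ∈ Finset.range (T - T₀), δ ^ (T₀ + j)
          ≤ ∑ j ∈ Finset.range (T - T₀), ε * δ ^ j := h1
        _ = ε * ∑ j ∈ Finset.range (T - T₀), δ ^ j := by rw [Finset.mul_sum]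
        _ ≤ ε * ∑ t ∈ Finset.range T, δ ^ t := mul_le_mul_of_nonneg_left h2 hε0.le
    linarith [hdecomp, htail]
  -- combine
  have hc : (0:ℝ) ≤ (1-β)^2 * (α-ε) := mul_nonneg (by positivity) hαε
  calc (1 - ε) * (1 - β) ^ 2 * (α - ε) * ∑ t ∈ Finset.range T, δ ^ t
      = (1-β)^2 * (α-ε) * ((1-ε) * ∑ t ∈ Finset.range T, δ ^ t) := by ring
    _ ≤ (1-β)^2 * (α-ε) * ∑ t ∈ Finset.range T₀, δ ^ t :=
        mul_le_mul_of_nonneg_left stepD hc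
    _ ≤ (1-β)^2 * (α-ε) * ((ℓ:ℝ) * S) := mul_le_mul_of_nonneg_left stepC hc
    _ = (1-β) * ((1-β) * (α-ε) * (ℓ:ℝ) * S) := by ring
    _ ≤ (1-β) * F := mul_le_mul_of_nonneg_left hfair hβ'.le
    _ ≤ ∑ t ∈ Finset.range T₀, δ ^ t * x (t+1) := stepB
    _ ≤ ∑ t ∈ Finset.range T, δ ^ t * x (t+1) := stepA
end
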